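/- arXiv:2202.02174 — 4 statements merged into one kernel-verified Lean document; each statement's English description precedes it below -/
import Mathlib

section
/- For a finite planar graph G and a vertex set X ⊆ V(G), the number of connected components C of G − X with |N_G(C)| ≥ 3 is at most 2·|X|. -/
/-- A minor model of `H` in `G`: pairwise disjoint nonempty connected branch sets,
one for each vertex of `H`, with an edge of `G` between the branch sets of any two
vertices adjacent in `H`. `HasMinor G H` means `H` is a minor of `G`. -/
def HasMinor {α β : Type*} (G : SimpleGraph α) (H : SimpleGraph β) : Prop :=
  ∃ P : β → Set α,
    (∀ b, (P b).Nonempty) ∧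
    (∀ b, (G.induce (P b)).Connected) ∧
    (Pairwise (Function.onFun Disjoint P)) ∧
    (∀ b₁ b₂, H.Adj b₁ b₂ → ∃ a₁ ∈ P b₁, ∃ a₂ ∈ P b₂, G.Adj a₁ a₂)

/-- Planarity of a (finite) simple graph, via Wagner's theorem: a graph is planar
iff it contains neither `K₅` nor `K₃,₃` as a minor. -/
def IsPlanar {α : Type*} (G : SimpleGraph α) : Prop :=
  ¬ HasMinor G (⊤ : SimpleGraph (Fin 5)) ∧
    ¬ HasMinor G (completeBipartiteGraph (Fin 3) (Fin 3))

open SimpleGraph Set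

open scoped Classical

namespace Stmt7

variable {V : Type*} {G : SimpleGraph V}

lemma hasMinor_K33 (p q : Fin 3 → Set V)
    (hpne : ∀ i, (p i).Nonempty) (hqne : ∀ i, (q i).Nonempty)
    (hpc : ∀ i, (G.induce (p i)).Connected) (hqc : ∀ i, (G.induce (q i)).Connected)
    (hpp : ∀ i j, i ≠ j → Disjoint (p i) (p j))
    (hqq : ∀ i j, i ≠ j → Disjoint (q i) (q j))
    (hpq : ∀ i j, Disjoint (p i) (q j))
    (hadj : ∀ i j, ∃ u ∈ p i, ∃ v ∈ q j, G.Adj u v) :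
    HasMinor G (completeBipartiteGraph (Fin 3) (Fin 3)) := by
  refine ⟨Sum.elim p q, ?_, ?_, ?_, ?_⟩
  · rintro (i|i)
    exacts [hpne i, hqne i]
  · rintro (i|i)
    exacts [hpc i, hqc i]
  · rintro (i|i) (j|j) hij <;>
      simp only [Function.onFun, Sum.elim_inl, Sum.elim_inr]
    · exact hpp i j (fun h => hij (by rw [h]))
    · exact hpq i j
    · exact (hpq j i).symm
    · exact hqq i j (fun h => hij (by rw [h]))
  · rintro (i|i) (j|j) hab <;>
      simp only [completeBipartiteGraph, Sum.isLeft_inl, Sum.isRight_inl, Sum.isLeft_inr,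
        Sum.isRight_inr] at hab
    · simp at hab
    · obtain ⟨u, hu, v, hv, h⟩ := hadj i j
      exact ⟨u, hu, v, hv, h⟩
    · obtain ⟨u, hu, v, hv, h⟩ := hadj j i
      exact ⟨v, hv, u, hu, h.symm⟩
    · simp at hab

/-- A configuration of disjoint connected "branch" sets `A` and "star" sets `I`
in `G`, where each star `i` is attached to the 3 branches in `N i`. -/
structure Cfg (G : SimpleGraph V) where
  A : Finset (Set V)
  I : Finset (Set V)
  N : Set V → Finset (Set V)
  nonem : ∀ s ∈ A ∪ I, Set.Nonempty s
  conn : ∀ s ∈ A ∪ I, (G.induce s).Connected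
  disj : (↑(A ∪ I) : Set (Set V)).Pairwise Disjoint
  disjAI : Disjoint A I
  hNA : ∀ i ∈ I, N i ⊆ A
  hN3 : ∀ i ∈ I, (N i).card = 3
  adj : ∀ i ∈ I, ∀ a ∈ N i, ∃ u ∈ i, ∃ v ∈ a, G.Adj u v

namespace Cfg

lemma disj' (c : Cfg G) {s t : Set V} (hs : s ∈ c.A ∪ c.I) (ht : t ∈ c.A ∪ c.I)
    (hst : s ≠ t) : Disjoint s t :=
  c.disj (by exact_mod_cast hs) (by exact_mod_cast ht) hst

lemma ne_AI (c : Cfg G) {a i : Set V} (ha : a ∈ c.A) (hi : i ∈ c.I) : a ≠ i := by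
  intro h; exact (Finset.disjoint_left.mp c.disjAI) ha (h ▸ hi)

def restrict (c : Cfg G) (A' I' : Finset (Set V)) (hA : A' ⊆ c.A) (hI : I' ⊆ c.I)
    (hN : ∀ i ∈ I', c.N i ⊆ A') : Cfg G where
  A := A'
  I := I'
  N := c.N
  nonem s hs := c.nonem s (Finset.union_subset_union hA hI hs)
  conn s hs := c.conn s (Finset.union_subset_union hA hI hs)
  disj := c.disj.mono (by exact_mod_cast Finset.union_subset_union hA hI)
  disjAI := c.disjAI.mono hA hI
  hNA := hN
  hN3 i hi := c.hN3 i (hI hi)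
  adj i hi := c.adj i (hI hi)

lemma thrice (c : Cfg G) (i₁ i₂ i₃ : Set V) (h₁ : i₁ ∈ c.I) (h₂ : i₂ ∈ c.I) (h₃ : i₃ ∈ c.I)
    (h12 : i₁ ≠ i₂) (h13 : i₁ ≠ i₃) (h23 : i₂ ≠ i₃)
    (hN12 : c.N i₁ = c.N i₂) (hN13 : c.N i₁ = c.N i₃) :
    HasMinor G (completeBipartiteGraph (Fin 3) (Fin 3)) := by
  obtain ⟨a, b, d, hab, had, hbd, hN⟩ := Finset.card_eq_three.mp (c.hN3 i₁ h₁)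
  have hmemN : ∀ x ∈ ({a, b, d} : Finset (Set V)), x ∈ c.A := by
    rw [← hN]; exact fun x hx => c.hNA i₁ h₁ hx
  have haA := hmemN a (by simp)
  have hbA := hmemN b (by simp)
  have hdA := hmemN d (by simp)
  have hpA : ∀ i, (![a, b, d]) i ∈ c.A := by
    intro i; fin_cases i <;> assumption
  have hqI : ∀ i, (![i₁, i₂, i₃]) i ∈ c.I := by
    intro i; fin_cases i <;> assumption
  have hNq : ∀ j, c.N ((![i₁, i₂, i₃]) j) = {a, b, d} := by
    intro j; fin_cases j <;> simp [← hN12, ← hN13, hN]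
  apply hasMinor_K33 (![a, b, d]) (![i₁, i₂, i₃])
  · intro i; exact c.nonem _ (Finset.mem_union_left _ (hpA i))
  · intro i; exact c.nonem _ (Finset.mem_union_right _ (hqI i))
  · intro i; exact c.conn _ (Finset.mem_union_left _ (hpA i))
  · intro i; exact c.conn _ (Finset.mem_union_right _ (hqI i))
  · intro i j hij
    refine c.disj' (Finset.mem_union_left _ (hpA i)) (Finset.mem_union_left _ (hpA j)) ?_
    fin_cases i <;> fin_cases j <;>
      first
        | exact absurd rfl hij
        | simp [hab, had, hbd, hab.symm, had.symm, hbd.symm]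
  · intro i j hij
    refine c.disj' (Finset.mem_union_right _ (hqI i)) (Finset.mem_union_right _ (hqI j)) ?_
    fin_cases i <;> fin_cases j <;>
      first
        | exact absurd rfl hij
        | simp [h12, h13, h23, h12.symm, h13.symm, h23.symm]
  · intro i j
    exact c.disj' (Finset.mem_union_left _ (hpA i)) (Finset.mem_union_right _ (hqI j))
      (c.ne_AI (hpA i) (hqI j))
  · intro i j
    have hx : (![a, b, d]) i ∈ c.N ((![i₁, i₂, i₃]) j) := by
      rw [hNq j]; fin_cases i <;> simp
    obtain ⟨u, hu, v, hv, h⟩ := c.adj _ (hqI j) _ hx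
    exact ⟨v, hv, u, hu, h.symm⟩

end Cfg

end Stmt7

namespace Stmt7
open Cfg

variable {V : Type*} {G : SimpleGraph V}

/-- Two branches of `W` are related if some star of `I` contains both. -/
def srel (N : Set V → Finset (Set V)) (I W : Finset (Set V)) (u v : Set V) : Prop :=
  u ∈ W ∧ v ∈ W ∧ u ≠ v ∧ ∃ i ∈ I, u ∈ N i ∧ v ∈ N i

/-- `W` is connected via stars of `I`. -/
def connW (N : Set V → Finset (Set V)) (I W : Finset (Set V)) : Prop :=
  ∀ u ∈ W, ∀ v ∈ W, Relation.ReflTransGen (srel N I W) u v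

lemma srel_symm (N : Set V → Finset (Set V)) (I W : Finset (Set V)) :
    Symmetric (srel N I W) := by
  rintro x y ⟨h1, h2, h3, i, hi, h4, h5⟩
  exact ⟨h2, h1, h3.symm, i, hi, h5, h4⟩

/-- number of stars having at least two attachments in `W`. -/
noncomputable def sig (N : Set V → Finset (Set V)) (I W : Finset (Set V)) : ℕ :=
  (I.filter fun i => 2 ≤ ((N i) ∩ W).card).card

lemma induce_connected_adj_union {v w : V} {s t : Set V}
    (sconn : (G.induce s).Connected) (tconn : (G.induce t).Connected)
    (hv : v ∈ s) (hw : w ∈ t) (ha : G.Adj v w) : (G.induce (s ∪ t)).Connected :=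
  connected_induce_union sconn.preconnected tconn.preconnected hv hw ha

lemma rtg_symmetric {α : Type*} {r : α → α → Prop} (h : Symmetric r) :
    Symmetric (Relation.ReflTransGen r) := fun x y hxy =>
  (@Relation.ReflTransGen.stdSymm _ r ⟨fun a b => @h a b⟩).symm x y hxy

lemma contract (c : Cfg G) (W : Finset (Set V)) (hWA : W ⊆ c.A) (h2 : 2 ≤ W.card)
    (hconn : connW c.N c.I W) :
    ∃ c' : Cfg G, c'.A.card + W.card = c.A.card + 1 ∧
      c'.I.card + sig c.N c.I W = c.I.card := by
  classical
  set SW : Finset (Set V) := c.I.filter (fun i => 2 ≤ ((c.N i) ∩ W).card) with hSW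
  have hSWI : SW ⊆ c.I := Finset.filter_subset _ _
  set z : Set V := ⋃₀ (W : Set (Set V)) ∪ ⋃₀ (SW : Set (Set V)) with hz
  have hWz : ∀ w ∈ W, w ⊆ z := fun w hw =>
    (Set.subset_sUnion_of_mem (by exact_mod_cast hw)).trans Set.subset_union_left
  have hSWz : ∀ i ∈ SW, i ⊆ z := fun i hi =>
    (Set.subset_sUnion_of_mem (by exact_mod_cast hi)).trans Set.subset_union_right
  obtain ⟨w₀, hw₀⟩ : W.Nonempty := Finset.card_pos.mp (by omega)
  have hw₀AI : w₀ ∈ c.A ∪ c.I := Finset.mem_union_left _ (hWA hw₀)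
  obtain ⟨u₀, hu₀⟩ := c.nonem w₀ hw₀AI
  have hzne : z.Nonempty := ⟨u₀, hWz w₀ hw₀ hu₀⟩
  have hdisjz : ∀ t ∈ c.A ∪ c.I, t ∉ W → t ∉ SW → Disjoint t z := by
    intro t ht htW htSW
    rw [hz, Set.disjoint_union_right]
    constructor
    · rw [Set.disjoint_sUnion_right]
      intro w hw
      rw [Finset.mem_coe] at hw
      exact c.disj' ht (Finset.mem_union_left _ (hWA hw)) (fun h => htW (h ▸ hw))
    · rw [Set.disjoint_sUnion_right]
      intro i hi
      rw [Finset.mem_coe] at hi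
      exact c.disj' ht (Finset.mem_union_right _ (hSWI hi)) (fun h => htSW (h ▸ hi))
  have hzne' : ∀ t ∈ c.A ∪ c.I, t ∉ W → t ∉ SW → z ≠ t := by
    intro t ht htW htSW h
    have := hdisjz t ht htW htSW
    rw [h] at hzne this
    exact hzne.ne_empty (by simpa using disjoint_self.mp this)
  -- connectivity of z
  have key : ∀ w, Relation.ReflTransGen (srel c.N c.I W) w₀ w →
      ∃ s, s ⊆ z ∧ (G.induce s).Connected ∧ w₀ ⊆ s ∧ w ⊆ s := by
    intro w hw
    induction hw with
    | refl =>
      exact ⟨w₀, hWz w₀ hw₀, c.conn w₀ hw₀AI, subset_rfl, subset_rfl⟩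
    | @tail b c' hbc hrel ih =>
      obtain ⟨s, hsz, hsconn, hw₀s, hbs⟩ := ih
      obtain ⟨hbW, hcW, hbc', i, hiI, hbN, hcN⟩ := hrel
      have hiSW : i ∈ SW := by
        rw [hSW, Finset.mem_filter]
        refine ⟨hiI, ?_⟩
        have hsub : ({b, c'} : Finset (Set V)) ⊆ c.N i ∩ W := by
          intro x hx
          rw [Finset.mem_insert, Finset.mem_singleton] at hx
          rcases hx with h | h <;> subst h <;> rw [Finset.mem_inter] <;> exact ⟨‹_›, ‹_›⟩
        calc 2 = ({b, c'} : Finset (Set V)).card := by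
                  rw [Finset.card_insert_of_notMem (by simpa using hbc'), Finset.card_singleton]
             _ ≤ _ := Finset.card_le_card hsub
      obtain ⟨u, hui, v, hvc, huv⟩ := c.adj i hiI c' hcN
      obtain ⟨u', hui', v', hvb, huv'⟩ := c.adj i hiI b hbN
      have hic : (G.induce (i ∪ c')).Connected := by
        refine induce_connected_adj_union ?_ ?_ hui hvc huv
        · exact c.conn i (Finset.mem_union_right _ hiI)
        · exact c.conn c' (Finset.mem_union_left _ (hWA hcW))
      have hconn2 : (G.induce (s ∪ (i ∪ c'))).Connected :=
        induce_connected_adj_union hsconn hic (hbs hvb) (Or.inl hui') huv'.symm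
      refine ⟨s ∪ (i ∪ c'), ?_, hconn2, hw₀s.trans Set.subset_union_left, ?_⟩
      · exact Set.union_subset hsz (Set.union_subset (hSWz i hiSW) (hWz c' hcW))
      · exact Set.subset_union_right.trans' (Set.subset_union_right)
  have hzconn : (G.induce z).Connected := by
    apply G.induce_connected_of_patches u₀ (hWz w₀ hw₀ hu₀)
    intro v hv
    rw [hz, Set.mem_union] at hv
    rcases hv with hv | hv
    · obtain ⟨w, hwW, hvw⟩ := hv
      rw [Finset.mem_coe] at hwW
      obtain ⟨s, hsz, hsconn, hw₀s, hws⟩ := key w (hconn w₀ hw₀ w hwW)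
      exact ⟨s, hsz, hw₀s hu₀, hws hvw, hsconn.preconnected _ _⟩
    · obtain ⟨i, hiSW, hvi⟩ := hv
      rw [Finset.mem_coe] at hiSW
      have h2i : 2 ≤ ((c.N i) ∩ W).card := (Finset.mem_filter.mp hiSW).2
      obtain ⟨w, hw⟩ : ((c.N i) ∩ W).Nonempty := Finset.card_pos.mp (by omega)
      rw [Finset.mem_inter] at hw
      obtain ⟨s, hsz, hsconn, hw₀s, hws⟩ := key w (hconn w₀ hw₀ w hw.2)
      obtain ⟨u, hui, vv, hvvw, huvv⟩ := c.adj i (hSWI hiSW) w hw.1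
      have hconn2 : (G.induce (s ∪ i)).Connected :=
        induce_connected_adj_union hsconn (c.conn i (Finset.mem_union_right _ (hSWI hiSW)))
          (hws hvvw) hui huvv.symm
      exact ⟨s ∪ i, Set.union_subset hsz (hSWz i hiSW), Or.inl (hw₀s hu₀), Or.inr hvi,
        hconn2.preconnected _ _⟩
  -- the new configuration
  have hzAI : ∀ t ∈ (c.A \ W) ∪ (c.I \ SW), t ∉ W ∧ t ∉ SW ∧ t ∈ c.A ∪ c.I := by
    intro t ht
    rw [Finset.mem_union] at ht
    rcases ht with ht | ht <;> rw [Finset.mem_sdiff] at ht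
    · refine ⟨ht.2, fun hc => ?_, Finset.mem_union_left _ ht.1⟩
      exact (Finset.disjoint_left.mp c.disjAI) ht.1 (hSWI hc)
    · refine ⟨fun hc => ?_, ht.2, Finset.mem_union_right _ ht.1⟩
      exact (Finset.disjoint_left.mp c.disjAI) (hWA hc) ht.1
  have hznotin : ∀ t ∈ (c.A \ W) ∪ (c.I \ SW), z ≠ t := by
    intro t ht
    obtain ⟨h1, h2, h3⟩ := hzAI t ht
    exact hzne' t h3 h1 h2
  refine ⟨⟨insert z (c.A \ W), c.I \ SW,
    fun i => if ((c.N i) ∩ W) = ∅ then c.N i else insert z ((c.N i) \ W),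
    ?_, ?_, ?_, ?_, ?_, ?_, ?_⟩, ?_, ?_⟩
  · -- nonem
    intro s hs
    rw [Finset.insert_union, Finset.mem_insert] at hs
    rcases hs with rfl | hs
    · exact hzne
    · exact c.nonem s (hzAI s hs).2.2
  · -- conn
    intro s hs
    rw [Finset.insert_union, Finset.mem_insert] at hs
    rcases hs with rfl | hs
    · exact hzconn
    · exact c.conn s (hzAI s hs).2.2
  · -- disj
    intro s hs t ht hst
    rw [Finset.mem_coe, Finset.insert_union, Finset.mem_insert] at hs ht
    rcases hs with rfl | hs <;> rcases ht with rfl | ht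
    · exact absurd rfl hst
    · obtain ⟨h1, h2, h3⟩ := hzAI t ht
      exact (hdisjz t h3 h1 h2).symm
    · obtain ⟨h1, h2, h3⟩ := hzAI s hs
      exact hdisjz s h3 h1 h2
    · exact c.disj' (hzAI s hs).2.2 (hzAI t ht).2.2 hst
  · -- disjAI
    rw [Finset.disjoint_left]
    intro s hs hsI
    rw [Finset.mem_insert] at hs
    rcases hs with rfl | hs
    · exact hznotin _ (Finset.mem_union_right _ hsI) rfl
    · rw [Finset.mem_sdiff] at hs hsI
      exact (Finset.disjoint_left.mp c.disjAI) hs.1 hsI.1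
  · -- hNA
    intro i hi
    rw [Finset.mem_sdiff] at hi
    by_cases hNiW : ((c.N i) ∩ W) = ∅
    · simp only [hNiW, if_pos]
      intro x hx
      have hxA : x ∈ c.A := c.hNA i hi.1 hx
      have hxW : x ∉ W := by
        intro hc
        have : x ∈ (c.N i) ∩ W := Finset.mem_inter.mpr ⟨hx, hc⟩
        rw [hNiW] at this
        exact absurd this (Finset.notMem_empty x)
      exact Finset.mem_insert_of_mem (Finset.mem_sdiff.mpr ⟨hxA, hxW⟩)
    · simp only [hNiW, if_neg, if_false]
      intro x hx
      rw [Finset.mem_insert] at hx ⊢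
      rcases hx with rfl | hx
      · exact Or.inl rfl
      · rw [Finset.mem_sdiff] at hx
        exact Or.inr (Finset.mem_sdiff.mpr ⟨c.hNA i hi.1 hx.1, hx.2⟩)
  · -- hN3
    intro i hi
    rw [Finset.mem_sdiff] at hi
    by_cases hNiW : ((c.N i) ∩ W) = ∅
    · simp only [hNiW, if_pos]
      exact c.hN3 i hi.1
    · simp only [hNiW, if_neg, if_false]
      have hle1 : ((c.N i) ∩ W).card ≤ 1 := by
        by_contra hc
        exact hi.2 (Finset.mem_filter.mpr ⟨hi.1, by omega⟩)
      have hge1 : 1 ≤ ((c.N i) ∩ W).card :=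
        Finset.card_pos.mpr (Finset.nonempty_iff_ne_empty.mpr hNiW)
      have hcard : ((c.N i) \ W).card = 2 := by
        have := Finset.card_inter_add_card_sdiff (c.N i) W
        have h3 := c.hN3 i hi.1
        omega
      have hznot : z ∉ (c.N i) \ W := by
        intro hc
        have hmem : z ∈ (c.A \ W) ∪ (c.I \ SW) := by
          apply Finset.mem_union_left
          rw [Finset.mem_sdiff] at hc ⊢
          exact ⟨c.hNA i hi.1 hc.1, hc.2⟩
        exact hznotin z hmem rfl
      rw [Finset.card_insert_of_notMem hznot, hcard]
  · -- adj
    intro i hi a ha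
    rw [Finset.mem_sdiff] at hi
    by_cases hNiW : ((c.N i) ∩ W) = ∅
    · simp only [hNiW, if_pos] at ha
      exact c.adj i hi.1 a ha
    · simp only [hNiW, if_neg, if_false] at ha
      rw [Finset.mem_insert] at ha
      rcases ha with rfl | ha
      · obtain ⟨w, hw⟩ : ((c.N i) ∩ W).Nonempty := Finset.nonempty_iff_ne_empty.mpr hNiW
        rw [Finset.mem_inter] at hw
        obtain ⟨u, hu, v, hv, huv⟩ := c.adj i hi.1 w hw.1
        exact ⟨u, hu, v, hWz w hw.2 hv, huv⟩
      · exact c.adj i hi.1 a (Finset.mem_sdiff.mp ha).1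
  · -- card A'
    have hznotinA : z ∉ c.A \ W := fun hc =>
      hznotin z (Finset.mem_union_left _ hc) rfl
    rw [Finset.card_insert_of_notMem hznotinA, Finset.card_sdiff_of_subset hWA]
    have := Finset.card_le_card hWA
    omega
  · -- card I'
    rw [Finset.card_sdiff_of_subset hSWI]
    have := Finset.card_le_card hSWI
    have : sig c.N c.I W = SW.card := rfl
    omega


variable {V : Type*} {G : SimpleGraph V}

theorem core : ∀ (n : ℕ) (c : Cfg G), c.A.card = n → 2 * n - 3 ≤ c.I.card →
    c.I.Nonempty → HasMinor G (completeBipartiteGraph (Fin 3) (Fin 3)) := by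
  intro n
  induction n using Nat.strong_induction_on with
  | _ n IH =>
  intro c hn hIcard hne
  have hn3 : 3 ≤ n := by
    obtain ⟨s', hs'⟩ := hne
    have h1 := c.hN3 s' hs'
    have h2 := Finset.card_le_card (c.hNA s' hs')
    omega
  obtain ⟨I₀, hI₀sub, hI₀card⟩ := Finset.exists_subset_card_eq (s := c.I) (n := 2 * n - 3) hIcard
  have hI₀ne : I₀.Nonempty := Finset.card_pos.mp (by omega)
  have hNA₀ : ∀ i ∈ I₀, c.N i ⊆ c.A := fun i hi => c.hNA i (hI₀sub hi)
  set c₀ : Cfg G := c.restrict c.A I₀ subset_rfl hI₀sub hNA₀ with hc₀def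
  -- Case 1 : three stars with the same attachment set
  by_cases hth : ∃ i₁ ∈ I₀, ∃ i₂ ∈ I₀, ∃ i₃ ∈ I₀,
      (i₁ ≠ i₂ ∧ i₁ ≠ i₃ ∧ i₂ ≠ i₃) ∧ c.N i₁ = c.N i₂ ∧ c.N i₁ = c.N i₃
  · obtain ⟨i₁, h₁, i₂, h₂, i₃, h₃, ⟨h12, h13, h23⟩, hN12, hN13⟩ := hth
    exact c₀.thrice i₁ i₂ i₃ h₁ h₂ h₃ h12 h13 h23 hN12 hN13
  -- Case 2 : a branch attached to at most two stars
  by_cases hdeg : ∃ a ∈ c.A, (I₀.filter fun i => a ∈ c.N i).card ≤ 2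
  · obtain ⟨a, haA, hd⟩ := hdeg
    have hfil : ∀ i ∈ I₀.filter (fun i => a ∉ c.N i), c.N i ⊆ c.A.erase a := by
      intro i hi
      rw [Finset.mem_filter] at hi
      exact Finset.subset_erase.mpr ⟨hNA₀ i hi.1, hi.2⟩
    have hfilcard : (I₀.filter (fun i => a ∉ c.N i)).card =
        I₀.card - (I₀.filter (fun i => a ∈ c.N i)).card := by
      rw [Finset.filter_not, Finset.card_sdiff_of_subset (Finset.filter_subset _ _)]
    apply IH (n - 1) (by omega)
      (c.restrict (c.A.erase a) (I₀.filter (fun i => a ∉ c.N i))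
        (Finset.erase_subset _ _) ((Finset.filter_subset _ _).trans hI₀sub) hfil)
    · show (c.A.erase a).card = n - 1
      rw [Finset.card_erase_of_mem haA, hn]
    · show 2 * (n - 1) - 3 ≤ (I₀.filter (fun i => a ∉ c.N i)).card
      omega
    · show (I₀.filter (fun i => a ∉ c.N i)).Nonempty
      apply Finset.card_pos.mp
      omega
  -- Case 3 : a separation
  by_cases hsep : ∃ B, B ⊆ c.A ∧ B.Nonempty ∧ B ≠ c.A ∧
      ∀ i ∈ I₀, c.N i ⊆ B ∨ ∀ x ∈ c.N i, x ∉ B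
  · obtain ⟨B, hBA, hBne, hBprop, hBsep⟩ := hsep
    set IB := I₀.filter (fun i => c.N i ⊆ B) with hIBdef
    set IC := I₀ \ IB with hICdef
    have hIBsub : IB ⊆ I₀ := Finset.filter_subset _ _
    have hICsub : IC ⊆ I₀ := Finset.sdiff_subset
    have hICprop : ∀ i ∈ IC, c.N i ⊆ c.A \ B := by
      intro i hi
      rw [hICdef, Finset.mem_sdiff] at hi
      intro x hx
      rcases hBsep i hi.1 with h | h
      · exact absurd (Finset.mem_filter.mpr ⟨hi.1, h⟩) hi.2
      · exact Finset.mem_sdiff.mpr ⟨hNA₀ i hi.1 hx, h x hx⟩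
    have hIBprop : ∀ i ∈ IB, c.N i ⊆ B := by
      intro i hi; exact (Finset.mem_filter.mp hi).2
    have hcards : IB.card + IC.card = I₀.card := by
      rw [hICdef, Finset.card_sdiff_of_subset hIBsub]
      have := Finset.card_le_card hIBsub
      omega
    have hBcard : B.card < n := by
      rw [← hn]
      exact Finset.card_lt_card (hBA.ssubset_of_ne hBprop)
    have hABcard : (c.A \ B).card = n - B.card := by
      rw [Finset.card_sdiff_of_subset hBA, hn]
    have hBlen : B.card ≤ n := hn ▸ Finset.card_le_card hBA
    have hABlt : (c.A \ B).card < n := by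
      have : 1 ≤ B.card := Finset.card_pos.mpr hBne
      omega
    have hIB3 : IB.Nonempty → 3 ≤ B.card := by
      rintro ⟨i, hi⟩
      calc 3 = (c.N i).card := (c.hN3 i (hI₀sub (hIBsub hi))).symm
        _ ≤ B.card := Finset.card_le_card (hIBprop i hi)
    have hIC3 : IC.Nonempty → 3 ≤ (c.A \ B).card := by
      rintro ⟨i, hi⟩
      calc 3 = (c.N i).card := (c.hN3 i (hI₀sub (hICsub hi))).symm
        _ ≤ _ := Finset.card_le_card (hICprop i hi)
    by_cases hgb : 2 * B.card - 3 ≤ IB.card ∧ 0 < IB.card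
    · exact IH B.card hBcard
        (c.restrict B IB hBA (hIBsub.trans hI₀sub) hIBprop) rfl hgb.1
        (Finset.card_pos.mp hgb.2)
    · have hICne : 0 < IC.card := by
        rcases Nat.eq_zero_or_pos IB.card with h0 | hpos
        · omega
        · have h3B := hIB3 (Finset.card_pos.mp hpos)
          rcases Nat.eq_zero_or_pos IC.card with h0' | hpos'
          · exfalso; apply hgb; constructor <;> omega
          · exact hpos'
      have h3AB := hIC3 (Finset.card_pos.mp hICne)
      apply IH (c.A \ B).card hABlt
        (c.restrict (c.A \ B) IC Finset.sdiff_subset (hICsub.trans hI₀sub) hICprop) rfl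
      · show 2 * (c.A \ B).card - 3 ≤ IC.card
        rcases Nat.eq_zero_or_pos IB.card with h0 | hpos
        · omega
        · have h3B := hIB3 (Finset.card_pos.mp hpos)
          have : ¬ (2 * B.card - 3 ≤ IB.card) := by
            intro hcon; exact hgb ⟨hcon, hpos⟩
          omega
      · exact Finset.card_pos.mp hICne
  -- Case 4 : a contractible connected set
  by_cases hgw : ∃ W, W ⊆ c.A ∧ 2 ≤ W.card ∧ W.card ≤ n - 2 ∧ connW c.N I₀ W ∧
      sig c.N I₀ W ≤ 2 * W.card - 2
  · obtain ⟨W, hWA, hW2, hWn2, hWconn, hWsig⟩ := hgw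
    obtain ⟨c', hA', hI'⟩ := contract c₀ W hWA hW2 hWconn
    have hc₀A : c₀.A.card = n := hn
    have hc₀I : c₀.I.card = 2 * n - 3 := hI₀card
    have hsig : sig c₀.N c₀.I W = sig c.N I₀ W := rfl
    rw [hc₀A] at hA'
    rw [hc₀I, hsig] at hI'
    apply IH c'.A.card (by omega) c' rfl (by omega)
    apply Finset.card_pos.mp
    omega
  -- Final case
  ·
    obtain ⟨s₀, hs₀⟩ := hI₀ne
    obtain ⟨a, b, cc, hab, hac, hbc, hNs₀⟩ := Finset.card_eq_three.mp (c.hN3 s₀ (hI₀sub hs₀))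
    have hsub₀ := hNA₀ s₀ hs₀
    have haN : a ∈ c.N s₀ := by rw [hNs₀]; simp
    have hbN : b ∈ c.N s₀ := by rw [hNs₀]; simp
    have hccN : cc ∈ c.N s₀ := by rw [hNs₀]; simp
    have haA : a ∈ c.A := hsub₀ haN
    have hbA : b ∈ c.A := hsub₀ hbN
    have hccA : cc ∈ c.A := hsub₀ hccN
    set D : Finset (Set V) := c.A \ {a, b} with hDdef
    have hDA : D ⊆ c.A := Finset.sdiff_subset
    have habA : ({a, b} : Finset (Set V)) ⊆ c.A := by
      intro x hx; rw [Finset.mem_insert, Finset.mem_singleton] at hx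
      rcases hx with rfl | rfl <;> assumption
    have hDcard : D.card = n - 2 := by
      rw [hDdef, Finset.card_sdiff_of_subset habA, hn,
        Finset.card_insert_of_notMem (by simpa using hab), Finset.card_singleton]
    have hmemD : ∀ x, x ∈ D ↔ (x ∈ c.A ∧ x ≠ a ∧ x ≠ b) := by
      intro x
      rw [hDdef, Finset.mem_sdiff, Finset.mem_insert, Finset.mem_singleton]
      tauto
    have hdeg3 : ∀ x ∈ c.A, 3 ≤ (I₀.filter fun i => x ∈ c.N i).card := by
      intro x hx
      by_contra hcon
      exact hdeg ⟨x, hx, by omega⟩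
    by_cases hedge : ∃ u ∈ D, ∃ v ∈ D, srel c.N I₀ D u v
    · -- there is a nontrivial component K of D
      obtain ⟨u, huD, v, hvD, huv⟩ := hedge
      set K : Finset (Set V) := D.filter (fun x => Relation.ReflTransGen (srel c.N I₀ D) u x)
        with hKdef
      have hKD : K ⊆ D := Finset.filter_subset _ _
      have hKmem : ∀ x, x ∈ K ↔ x ∈ D ∧ Relation.ReflTransGen (srel c.N I₀ D) u x := by
        intro x; rw [hKdef, Finset.mem_filter]
      have huK : u ∈ K := (hKmem u).mpr ⟨huD, .refl⟩
      have hvK : v ∈ K := (hKmem v).mpr ⟨hvD, .single huv⟩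
      have hRsymm := rtg_symmetric (srel_symm c.N I₀ D)
      have liftK : ∀ x y, x ∈ K → Relation.ReflTransGen (srel c.N I₀ D) x y →
          Relation.ReflTransGen (srel c.N I₀ K) x y := by
        intro x y hxK h
        induction h with
        | refl => exact .refl
        | @tail p q hxp hpq ih =>
          have hpK : p ∈ K := (hKmem p).mpr ⟨hpq.1, Relation.ReflTransGen.trans
            ((hKmem x).mp hxK).2 hxp⟩
          have hqK : q ∈ K := (hKmem q).mpr ⟨hpq.2.1, Relation.ReflTransGen.trans
            ((hKmem x).mp hxK).2 (hxp.tail hpq)⟩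
          exact ih.tail ⟨hpK, hqK, hpq.2.2.1, hpq.2.2.2⟩
      have hKconn : connW c.N I₀ K := by
        intro x hx y hy
        have hx' := liftK u x huK ((hKmem x).mp hx).2
        have hy' := liftK u y huK ((hKmem y).mp hy).2
        exact Relation.ReflTransGen.trans
          (rtg_symmetric (srel_symm c.N I₀ K) hx') hy'
      have haK : a ∉ K := fun h => (((hmemD a).mp (hKD h)).2.1) rfl
      have hbK : b ∉ K := fun h => (((hmemD b).mp (hKD h)).2.2) rfl
      have haW₁ : a ∈ c.A \ K := Finset.mem_sdiff.mpr ⟨haA, haK⟩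
      have hbW₁ : b ∈ c.A \ K := Finset.mem_sdiff.mpr ⟨hbA, hbK⟩
      -- every component of D attaches to {a, b}
      have attach : ∀ x, x ∈ D → ∃ x' y' i, Relation.ReflTransGen (srel c.N I₀ D) x x' ∧
          (y' = a ∨ y' = b) ∧ x' ≠ y' ∧ i ∈ I₀ ∧ x' ∈ c.N i ∧ y' ∈ c.N i := by
        intro x hxD
        by_contra hno
        push_neg at hno
        apply hsep
        refine ⟨D.filter (fun y => Relation.ReflTransGen (srel c.N I₀ D) x y),
          (Finset.filter_subset _ _).trans hDA, ⟨x, Finset.mem_filter.mpr ⟨hxD, .refl⟩⟩, ?_, ?_⟩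
        · intro hBA'
          have : a ∈ D.filter (fun y => Relation.ReflTransGen (srel c.N I₀ D) x y) :=
            hBA' ▸ haA
          exact ((hmemD a).mp (Finset.mem_filter.mp this).1).2.1 rfl
        · intro i hi
          by_cases hint : ∃ p ∈ c.N i,
              p ∈ D.filter (fun y => Relation.ReflTransGen (srel c.N I₀ D) x y)
          · left
            obtain ⟨p, hpN, hpB⟩ := hint
            intro q hqN
            by_contra hqB
            have hqA : q ∈ c.A := hNA₀ i hi hqN
            have hpq : p ≠ q := fun h => hqB (h ▸ hpB)
            rw [Finset.mem_filter] at hpB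
            by_cases hqD : q ∈ D
            · have hstep : srel c.N I₀ D p q := ⟨hpB.1, hqD, hpq, i, hi, hpN, hqN⟩
              exact hqB (Finset.mem_filter.mpr ⟨hqD, hpB.2.tail hstep⟩)
            · have hqab : q = a ∨ q = b := by
                rw [hmemD] at hqD
                by_contra hq'
                push_neg at hq'
                exact hqD ⟨hqA, hq'.1, hq'.2⟩
              exact hno p q i hpB.2 hqab hpq hi hpN hqN
          · right
            intro q hqN hqB
            exact hint ⟨q, hqN, hqB⟩
      -- paths in D avoiding K lift to paths in c.A \ K
      have liftW : ∀ x y, x ∈ D → x ∉ K → Relation.ReflTransGen (srel c.N I₀ D) x y →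
          Relation.ReflTransGen (srel c.N I₀ (c.A \ K)) x y ∧ y ∉ K ∧ y ∈ D := by
        intro x y hxD hxK h
        induction h with
        | refl => exact ⟨.refl, hxK, hxD⟩
        | @tail p q hxp hpq ih =>
          obtain ⟨hpath, hpK, hpD⟩ := ih
          have hqK : q ∉ K := by
            intro hqK'
            apply hxK
            rw [hKmem]
            refine ⟨hxD, Relation.ReflTransGen.trans ((hKmem q).mp hqK').2
              (hRsymm (hxp.tail hpq))⟩
          refine ⟨hpath.tail ⟨Finset.mem_sdiff.mpr ⟨hDA hpD, hpK⟩,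
            Finset.mem_sdiff.mpr ⟨hDA hpq.2.1, hqK⟩, hpq.2.2.1, hpq.2.2.2⟩, hqK, hpq.2.1⟩
      -- connectivity of c.A \ K
      have hreach_a : ∀ x ∈ c.A \ K, Relation.ReflTransGen (srel c.N I₀ (c.A \ K)) x a := by
        intro x hx
        have hba : srel c.N I₀ (c.A \ K) b a := ⟨hbW₁, haW₁, fun h => hab h.symm, s₀, hs₀, hbN, haN⟩
        rcases eq_or_ne x a with rfl | hxa
        · exact .refl
        rcases eq_or_ne x b with rfl | hxb
        · exact .single hba
        have hxD : x ∈ D := (hmemD x).mpr ⟨(Finset.mem_sdiff.mp hx).1, hxa, hxb⟩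
        have hxK : x ∉ K := (Finset.mem_sdiff.mp hx).2
        obtain ⟨x', y', i, hreach, hy', hxy', hi, hx'N, hy'N⟩ := attach x hxD
        obtain ⟨hpath, hx'K, hx'D⟩ := liftW x x' hxD hxK hreach
        have hy'W₁ : y' ∈ c.A \ K := by rcases hy' with rfl | rfl <;> assumption
        have hstep : srel c.N I₀ (c.A \ K) x' y' :=
          ⟨Finset.mem_sdiff.mpr ⟨hDA hx'D, hx'K⟩, hy'W₁, hxy', i, hi, hx'N, hy'N⟩
        rcases hy' with rfl | rfl
        · exact hpath.tail hstep
        · exact (hpath.tail hstep).tail hba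
      have hW₁conn : connW c.N I₀ (c.A \ K) := by
        intro x hx y hy
        exact Relation.ReflTransGen.trans (hreach_a x hx)
          (rtg_symmetric (srel_symm c.N I₀ (c.A \ K)) (hreach_a y hy))
      -- cardinalities
      have hKA : K ⊆ c.A := hKD.trans hDA
      have hK2 : 2 ≤ K.card := by
        have : 1 < K.card := Finset.one_lt_card.mpr ⟨u, huK, v, hvK, huv.2.2.1⟩
        omega
      have hKle : K.card ≤ n - 2 := hDcard ▸ Finset.card_le_card hKD
      have hW₁card : (c.A \ K).card = n - K.card := by rw [Finset.card_sdiff_of_subset hKA, hn]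
      have hW₁2 : 2 ≤ (c.A \ K).card := by
        have : 1 < (c.A \ K).card := Finset.one_lt_card.mpr ⟨a, haW₁, b, hbW₁, hab⟩
        omega
      have hKn : K.card ≤ n := hn ▸ Finset.card_le_card hKA
      have hW₁le : (c.A \ K).card ≤ n - 2 := by omega
      have hd1 : 2 * (c.A \ K).card - 2 < sig c.N I₀ (c.A \ K) := by
        by_contra hcon
        push_neg at hcon
        exact hgw ⟨c.A \ K, Finset.sdiff_subset, hW₁2, hW₁le, hW₁conn, hcon⟩
      have hd2 : 2 * K.card - 2 < sig c.N I₀ K := by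
        by_contra hcon
        push_neg at hcon
        exact hgw ⟨K, hKA, hK2, hKle, hKconn, hcon⟩
      exfalso
      have hdisjS : Disjoint (I₀.filter (fun i => 2 ≤ (c.N i ∩ (c.A \ K)).card))
          (I₀.filter (fun i => 2 ≤ (c.N i ∩ K).card)) := by
        rw [Finset.disjoint_left]
        intro i hi1 hi2
        rw [Finset.mem_filter] at hi1 hi2
        have hdisj' : Disjoint (c.N i ∩ (c.A \ K)) (c.N i ∩ K) :=
          (Finset.sdiff_disjoint).mono Finset.inter_subset_right Finset.inter_subset_right
        have hsub' : (c.N i ∩ (c.A \ K)) ∪ (c.N i ∩ K) ⊆ c.N i :=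
          Finset.union_subset Finset.inter_subset_left Finset.inter_subset_left
        have hcard' := Finset.card_le_card hsub'
        rw [Finset.card_union_of_disjoint hdisj'] at hcard'
        have h3' := c.hN3 i (hI₀sub hi1.1)
        omega
      have htotal : sig c.N I₀ (c.A \ K) + sig c.N I₀ K ≤ I₀.card := by
        have hcard' := Finset.card_le_card (Finset.union_subset
          (Finset.filter_subset (fun i => 2 ≤ (c.N i ∩ (c.A \ K)).card) I₀)
          (Finset.filter_subset (fun i => 2 ≤ (c.N i ∩ K).card) I₀))
        rw [Finset.card_union_of_disjoint hdisjS] at hcard'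
        exact hcard'
      omega
    · -- no edge inside D : all stars through cc have attachments {a, b, cc}
      have hccD : cc ∈ D := (hmemD cc).mpr ⟨hccA, fun h => hac h.symm, fun h => hbc h.symm⟩
      have hNi : ∀ i ∈ I₀, cc ∈ c.N i → c.N i = {a, b, cc} := by
        intro i hi hcc
        have hsub : c.N i ⊆ {a, b, cc} := by
          intro x hx
          by_contra hx'
          rw [Finset.mem_insert, Finset.mem_insert, Finset.mem_singleton] at hx'
          push_neg at hx'
          have hxD : x ∈ D := (hmemD x).mpr ⟨hNA₀ i hi hx, hx'.1, hx'.2.1⟩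
          exact hedge ⟨cc, hccD, x, hxD, hccD, hxD, (fun h => hx'.2.2 h.symm), i, hi, hcc, hx⟩
        apply Finset.eq_of_subset_of_card_le hsub
        rw [← hNs₀, c.hN3 s₀ (hI₀sub hs₀), c.hN3 i (hI₀sub hi)]
      obtain ⟨T, hTsub, hT3⟩ := Finset.exists_subset_card_eq
        (s := I₀.filter fun i => cc ∈ c.N i) (n := 3) (hdeg3 cc hccA)
      obtain ⟨i₁, i₂, i₃, h12, h13, h23, hT⟩ := Finset.card_eq_three.mp hT3
      have hmemT : ∀ j ∈ T, j ∈ I₀ ∧ cc ∈ c.N j := fun j hj => Finset.mem_filter.mp (hTsub hj)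
      have h₁ : i₁ ∈ T := by rw [hT]; simp
      have h₂ : i₂ ∈ T := by rw [hT]; simp
      have h₃ : i₃ ∈ T := by rw [hT]; simp
      refine absurd ⟨i₁, (hmemT i₁ h₁).1, i₂, (hmemT i₂ h₂).1, i₃, (hmemT i₃ h₃).1,
        ⟨h12, h13, h23⟩, ?_, ?_⟩ hth
      · rw [hNi i₁ (hmemT i₁ h₁).1 (hmemT i₁ h₁).2, hNi i₂ (hmemT i₂ h₂).1 (hmemT i₂ h₂).2]
      · rw [hNi i₁ (hmemT i₁ h₁).1 (hmemT i₁ h₁).2, hNi i₃ (hmemT i₃ h₃).1 (hmemT i₃ h₃).2]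


lemma induce_singleton_connected (G : SimpleGraph V) (x : V) :
    (G.induce {x}).Connected := by
  have hne : Nonempty ({x} : Set V) := ⟨⟨x, rfl⟩⟩
  constructor
  intro u v
  have hu : (u : V) = x := u.2
  have hv : (v : V) = x := v.2
  rw [Subtype.ext (hu.trans hv.symm)]

lemma induce_image_supp_connected {s : Set V} (C : (G.induce s).ConnectedComponent) :
    (G.induce (Subtype.val '' C.supp)).Connected := by
  classical
  obtain ⟨v, hv⟩ := C.exists_rep
  have hvsupp : v ∈ C.supp := by rw [ConnectedComponent.mem_supp_iff]; exact hv
  apply G.induce_connected_of_patches (↑v) (Set.mem_image_of_mem Subtype.val hvsupp)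
  intro w hw
  obtain ⟨w', hw'supp, rfl⟩ := hw
  rw [ConnectedComponent.mem_supp_iff] at hw'supp
  have hreach : (G.induce s).Reachable v w' := ConnectedComponent.eq.mp (hv.trans hw'supp.symm)
  obtain ⟨p⟩ := hreach
  refine ⟨{x | x ∈ (p.map (SimpleGraph.Embedding.induce s).toHom).support}, ?_, ?_, ?_, ?_⟩
  · intro x hx
    rw [Set.mem_setOf_eq, SimpleGraph.Walk.support_map, List.mem_map] at hx
    obtain ⟨y, hy, rfl⟩ := hx
    refine ⟨y, ?_, rfl⟩
    rw [ConnectedComponent.mem_supp_iff, ← hv]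
    exact (ConnectedComponent.eq.mpr ⟨p.takeUntil y hy⟩).symm
  · exact (p.map (SimpleGraph.Embedding.induce s).toHom).start_mem_support
  · exact (p.map (SimpleGraph.Embedding.induce s).toHom).end_mem_support
  · exact ((p.map (SimpleGraph.Embedding.induce s).toHom).connected_induce_support).preconnected
      _ _

end Stmt7


/-- For a finite planar graph `G` and a vertex set `X ⊆ V(G)`, the number
of connected components `C` of `G − X` with `|N_G(C)| ≥ 3` is at most `2|X|`. -/
theorem stmt_7 {V : Type*} [Fintype V] (G : SimpleGraph V) (hG : IsPlanar G) (X : Set V) :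
    {C : (G.induce Xᶜ).ConnectedComponent |
        3 ≤ {x | x ∈ X ∧ ∃ c ∈ C.supp, G.Adj x ↑c}.ncard}.ncard ≤ 2 * X.ncard := by
  classical
  by_contra hcon
  push_neg at hcon
  set S := {C : (G.induce Xᶜ).ConnectedComponent |
      3 ≤ {x | x ∈ X ∧ ∃ c ∈ C.supp, G.Adj x ↑c}.ncard} with hSdef
  have hSfin : S.Finite := Set.toFinite S
  have hXfin : X.Finite := Set.toFinite X
  set F : (G.induce Xᶜ).ConnectedComponent → Set V := fun C => Subtype.val '' C.supp with hFdef
  have hFinj : Function.Injective F := fun C D h =>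
    SimpleGraph.ConnectedComponent.supp_injective
      ((Set.image_injective.mpr Subtype.val_injective) h)
  set A : Finset (Set V) := hXfin.toFinset.image (fun x => ({x} : Set V)) with hAdef
  set I : Finset (Set V) := hSfin.toFinset.image F with hIdef
  have hAmem : ∀ s, s ∈ A ↔ ∃ x ∈ X, ({x} : Set V) = s := by
    intro s
    rw [hAdef, Finset.mem_image]
    constructor
    · rintro ⟨x, hx, rfl⟩
      exact ⟨x, hXfin.mem_toFinset.mp hx, rfl⟩
    · rintro ⟨x, hx, rfl⟩
      exact ⟨x, hXfin.mem_toFinset.mpr hx, rfl⟩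
  have hImem : ∀ s, s ∈ I ↔ ∃ C ∈ S, F C = s := by
    intro s
    rw [hIdef, Finset.mem_image]
    constructor
    · rintro ⟨C, hC, rfl⟩
      exact ⟨C, hSfin.mem_toFinset.mp hC, rfl⟩
    · rintro ⟨C, hC, rfl⟩
      exact ⟨C, hSfin.mem_toFinset.mpr hC, rfl⟩
  have hAcard : A.card = X.ncard := by
    rw [hAdef, Finset.card_image_of_injective _ Set.singleton_injective,
      Set.ncard_eq_toFinset_card X hXfin]
  have hIcard : I.card = S.ncard := by
    rw [hIdef, Finset.card_image_of_injective _ hFinj, Set.ncard_eq_toFinset_card S hSfin]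
  have hIXc : ∀ s, s ∈ I → s ⊆ Xᶜ := by
    intro s hs
    obtain ⟨C, _, rfl⟩ := (hImem s).mp hs
    rintro z ⟨z', _, rfl⟩
    exact z'.2
  have hpick : ∀ s ∈ I, ∃ t : Finset (Set V), t ⊆ A ∧ t.card = 3 ∧
      ∀ a ∈ t, ∃ u ∈ s, ∃ v ∈ a, G.Adj u v := by
    intro s hs
    obtain ⟨C, hCS, rfl⟩ := (hImem s).mp hs
    have hC3 : 3 ≤ {x | x ∈ X ∧ ∃ c ∈ C.supp, G.Adj x ↑c}.ncard := hCS
    have hYfin : {x | x ∈ X ∧ ∃ c ∈ C.supp, G.Adj x ↑c}.Finite := Set.toFinite _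
    obtain ⟨T, hTsub, hT3⟩ := Finset.exists_subset_card_eq (s := hYfin.toFinset) (n := 3)
      (by rw [← Set.ncard_eq_toFinset_card _ hYfin]; exact hC3)
    refine ⟨T.image (fun x => ({x} : Set V)), ?_, ?_, ?_⟩
    · intro t ht
      obtain ⟨x, hx, rfl⟩ := Finset.mem_image.mp ht
      have hxY := hYfin.mem_toFinset.mp (hTsub hx)
      exact (hAmem _).mpr ⟨x, hxY.1, rfl⟩
    · rw [Finset.card_image_of_injective _ Set.singleton_injective, hT3]
    · intro a ha
      obtain ⟨x, hx, rfl⟩ := Finset.mem_image.mp ha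
      have hxY := hYfin.mem_toFinset.mp (hTsub hx)
      obtain ⟨cv, hcsupp, hadj⟩ := hxY.2
      exact ⟨↑cv, ⟨cv, hcsupp, rfl⟩, x, rfl, hadj.symm⟩
  set N : Set V → Finset (Set V) := fun s => if h : s ∈ I then (hpick s h).choose else ∅
    with hNdef
  have hNspec : ∀ s (h : s ∈ I), N s ⊆ A ∧ (N s).card = 3 ∧
      ∀ a ∈ N s, ∃ u ∈ s, ∃ v ∈ a, G.Adj u v := by
    intro s h
    rw [hNdef]
    simp only [dif_pos h]
    exact (hpick s h).choose_spec
  set cfg : Stmt7.Cfg G :=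
    { A := A
      I := I
      N := N
      nonem := by
        intro s hs
        rw [Finset.mem_union] at hs
        rcases hs with hs | hs
        · obtain ⟨x, _, rfl⟩ := (hAmem s).mp hs
          exact ⟨x, rfl⟩
        · obtain ⟨C, _, rfl⟩ := (hImem s).mp hs
          obtain ⟨v, hv⟩ := C.exists_rep
          exact ⟨↑v, v, by rw [SimpleGraph.ConnectedComponent.mem_supp_iff]; exact hv, rfl⟩
      conn := by
        intro s hs
        rw [Finset.mem_union] at hs
        rcases hs with hs | hs
        · obtain ⟨x, _, rfl⟩ := (hAmem s).mp hs
          exact Stmt7.induce_singleton_connected G x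
        · obtain ⟨C, _, rfl⟩ := (hImem s).mp hs
          exact Stmt7.induce_image_supp_connected C
      disj := by
        intro s hs t ht hst
        rw [Finset.mem_coe, Finset.mem_union] at hs ht
        have hXside : ∀ x, x ∈ X → ∀ u, u ∈ I → Disjoint ({x} : Set V) u := by
          intro x hx u hu
          rw [Set.disjoint_left]
          rintro z rfl hz2
          exact (hIXc u hu hz2) hx
        rcases hs with hs | hs <;> rcases ht with ht | ht
        · obtain ⟨x, hx, rfl⟩ := (hAmem s).mp hs
          obtain ⟨y, hy, rfl⟩ := (hAmem t).mp ht
          rw [Set.disjoint_singleton_left, Set.mem_singleton_iff]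
          exact fun h => hst (by rw [h])
        · obtain ⟨x, hx, rfl⟩ := (hAmem s).mp hs
          exact hXside x hx t ht
        · obtain ⟨y, hy, rfl⟩ := (hAmem t).mp ht
          exact (hXside y hy s hs).symm
        · obtain ⟨C, hC, rfl⟩ := (hImem s).mp hs
          obtain ⟨D, hD, rfl⟩ := (hImem t).mp ht
          have hCD : C ≠ D := fun h => hst (by rw [h])
          exact Set.disjoint_image_of_injective Subtype.val_injective
            (SimpleGraph.pairwise_disjoint_supp_connectedComponent _ hCD)
      disjAI := by
        rw [Finset.disjoint_left]
        intro s hs hsI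
        obtain ⟨x, hx, rfl⟩ := (hAmem s).mp hs
        exact (hIXc _ hsI rfl) hx
      hNA := fun i hi => (hNspec i hi).1
      hN3 := fun i hi => (hNspec i hi).2.1
      adj := fun i hi => (hNspec i hi).2.2 }
    with hcfgdef
  have hminor : HasMinor G (completeBipartiteGraph (Fin 3) (Fin 3)) := by
    apply Stmt7.core A.card cfg rfl
    · show 2 * A.card - 3 ≤ I.card
      rw [hAcard, hIcard]
      omega
    · show I.Nonempty
      apply Finset.card_pos.mp
      rw [hIcard]
      omega
  exact hG.2 hminor
end

section
/- Let the triangulated grid ⊠ₖ be the graph on vertex set [k]×[k] with edges (i,j)–(i+1,j), (i,j)–(i,j+1), and (i,j)–(i+1,j-1) (whenever defined). Let H be a graph on vertex set [k]×[k] whose edge set contains E(⊠ₖ), let U ⊆ [k]×[k] induce a connected subgraph of ⊠ₖ, and suppose there exist distinct x, y ∈ U such that x = (i,j) with 3 ≤ i,j ≤ k−2, all 25 vertices of the 5×5 subgrid centered at x are in U, and xy ∈ E(H) \ E(⊠ₖ). Then H[U] contains K₅ as a minor (hence is not planar). -/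
/-- The triangulated grid `⊠ₖ` on vertex set `Fin k × Fin k` (0-indexed), with edges
`(i,j)–(i+1,j)`, `(i,j)–(i,j+1)` and `(i,j)–(i+1,j-1)` whenever defined. -/
def triGrid (k : ℕ) : SimpleGraph (Fin k × Fin k) :=
  SimpleGraph.fromRel fun a b =>
    (b.1.val = a.1.val + 1 ∧ b.2 = a.2) ∨
    (b.1 = a.1 ∧ b.2.val = a.2.val + 1) ∨
    (b.1.val = a.1.val + 1 ∧ a.2.val = b.2.val + 1)


open SimpleGraph

lemma induce_singleton_connected {V : Type*} (G : SimpleGraph V) (a : V) :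
    (G.induce ({a} : Set V)).Connected := by
  rw [SimpleGraph.induce_singleton_eq_top]
  exact @SimpleGraph.connected_top _ ⟨⟨a, rfl⟩⟩

lemma induce_insert_connected {V : Type*} {G : SimpleGraph V} {s : Set V} {a b : V}
    (hb : b ∈ s) (hab : G.Adj a b) (hs : (G.induce s).Connected) :
    (G.induce (insert a s)).Connected := by
  have h := SimpleGraph.connected_induce_union (s := {a}) (t := s)
    (induce_singleton_connected G a).preconnected hs.preconnected rfl hb hab
  simpa [Set.singleton_union] using h

lemma prefix_lemma {V : Type*} {G : SimpleGraph V} (T : Set V) [DecidablePred (· ∈ T)] :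
    ∀ {a b : V} (w : G.Walk a b), b ∈ T →
    ∃ c S, c ∈ T ∧ c ∈ S ∧ a ∈ S ∧ (∀ z ∈ S, z ∈ w.support) ∧
      (∀ z ∈ S, z ∈ T → z = c) ∧ (G.induce S).Connected ∧
      (a ∈ T → S = {a}) ∧ (a ∉ T → ∃ d ∈ S, d ∉ T ∧ G.Adj d c)
  | a, _, SimpleGraph.Walk.nil, hb =>
    ⟨a, {a}, hb, rfl, rfl, by simp, fun z hz _ => hz,
      induce_singleton_connected G a, fun _ => rfl, fun h => absurd hb h⟩
  | u, b, SimpleGraph.Walk.cons (v := v) h p, hb =>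
    if hu : u ∈ T then
      ⟨u, {u}, hu, rfl, rfl, by simp, fun z hz _ => hz,
        induce_singleton_connected G u, fun _ => rfl, fun h' => absurd hu h'⟩
    else by
      obtain ⟨c, S, hcT, hcS, hvS, hsup, huniq, hconn, hS1, hS2⟩ := prefix_lemma T p hb
      refine ⟨c, insert u S, hcT, Set.mem_insert_of_mem _ hcS, Set.mem_insert _ _,
        ?_, ?_, induce_insert_connected hvS h hconn, fun h' => absurd h' hu, ?_⟩
      · intro z hz
        rcases hz with rfl | hz
        · simp
        · simp only [SimpleGraph.Walk.support_cons, List.mem_cons]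
          exact Or.inr (hsup z hz)
      · intro z hz hzT
        rcases hz with rfl | hz
        · exact absurd hzT hu
        · exact huniq z hz hzT
      · intro _
        by_cases hvT : v ∈ T
        · have hSv : S = {v} := hS1 hvT
          have hcv : c = v := by rw [hSv] at hcS; exact hcS
          exact ⟨u, Set.mem_insert _ _, hu, hcv ▸ h⟩
        · obtain ⟨d, hdS, hdT, hdc⟩ := hS2 hvT
          exact ⟨d, Set.mem_insert_of_mem _ hdS, hdT, hdc⟩

lemma induce_induce_connected {V : Type*} (G : SimpleGraph V) {U s : Set V}
    (hsU : s ⊆ U) (h : (G.induce s).Connected) :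
    ((G.induce U).induce (Subtype.val ⁻¹' s)).Connected := by
  have e : G.induce s ≃g (G.induce U).induce (Subtype.val ⁻¹' s) :=
    { toFun := fun p => ⟨⟨p.1, hsU p.2⟩, p.2⟩
      invFun := fun q => ⟨q.1.1, q.2⟩
      left_inv := fun p => rfl
      right_inv := fun q => rfl
      map_rel_iff' := by intro p q; simp }
  exact e.connected_iff.mp h


set_option maxHeartbeats 2000000 in
/-- Let `H` be an extension of the triangulated grid `⊠ₖ`
(`E(⊠ₖ) ⊆ E(H)`), let `U` induce a connected subgraph of `⊠ₖ`, and suppose there are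
distinct `x, y ∈ U` such that `x` is internal (in 0-indexed coordinates:
`2 ≤ x.1, x.2` and `x.1 + 3, x.2 + 3 ≤ k`), the whole `5×5` subgrid `T[x]` centered at
`x` is contained in `U`, and `xy ∈ E(H) \ E(⊠ₖ)`. Then `H[U]` contains `K₅` as a minor
(hence is not planar). -/
theorem stmt_9 (k : ℕ) (H : SimpleGraph (Fin k × Fin k)) (hext : triGrid k ≤ H)
    (U : Set (Fin k × Fin k)) (hU : ((triGrid k).induce U).Connected)
    (x y : Fin k × Fin k) (hxy : x ≠ y) (hxU : x ∈ U) (hyU : y ∈ U)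
    (hi₁ : 2 ≤ x.1.val) (hi₂ : x.1.val + 3 ≤ k)
    (hj₁ : 2 ≤ x.2.val) (hj₂ : x.2.val + 3 ≤ k)
    (hTx : ∀ p : Fin k × Fin k,
      (x.1.val - 2 ≤ p.1.val ∧ p.1.val ≤ x.1.val + 2 ∧
        x.2.val - 2 ≤ p.2.val ∧ p.2.val ≤ x.2.val + 2) → p ∈ U)
    (hedge : H.Adj x y) (hnotgrid : ¬ (triGrid k).Adj x y) :
    HasMinor (H.induce U) (⊤ : SimpleGraph (Fin 5)) := by
  classical
  have hk : 4 < k := by omega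
  set v : ℕ → ℕ → Fin k × Fin k := fun a b =>
    (⟨min (x.1.val + 2) (x.1.val - 2 + a), by omega⟩,
     ⟨min (x.2.val + 2) (x.2.val - 2 + b), by omega⟩) with hvdef
  have hv1 : ∀ a b : ℕ, a ≤ 4 → (v a b).1.val = x.1.val - 2 + a := by
    intro a b ha; rw [hvdef]; dsimp only; omega
  have hv2 : ∀ a b : ℕ, b ≤ 4 → (v a b).2.val = x.2.val - 2 + b := by
    intro a b hb; rw [hvdef]; dsimp only; omega
  have hveq : ∀ (p : Fin k × Fin k) (a b : ℕ), a ≤ 4 → b ≤ 4 →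
      p.1.val = x.1.val - 2 + a → p.2.val = x.2.val - 2 + b → p = v a b := by
    intro p a b ha hb h1 h2
    have e1 : p.1 = (v a b).1 := Fin.ext (by rw [hv1 a b ha]; omega)
    have e2 : p.2 = (v a b).2 := Fin.ext (by rw [hv2 a b hb]; omega)
    exact Prod.ext e1 e2
  have hvinj : ∀ a b a' b' : ℕ, a ≤ 4 → b ≤ 4 → a' ≤ 4 → b' ≤ 4 →
      v a b = v a' b' → a = a' ∧ b = b' := by
    intro a b a' b' ha hb ha' hb' h
    have e1 : (v a b).1.val = (v a' b').1.val := by rw [h]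
    have e2 : (v a b).2.val = (v a' b').2.val := by rw [h]
    rw [hv1 a b ha, hv1 a' b' ha'] at e1
    rw [hv2 a b hb, hv2 a' b' hb'] at e2
    omega
  have hvne : ∀ a b a' b' : ℕ, a ≤ 4 → b ≤ 4 → a' ≤ 4 → b' ≤ 4 →
      ¬(a = a' ∧ b = b') → v a b ≠ v a' b' := by
    intro a b a' b' ha hb ha' hb' hne heq
    obtain ⟨e1, e2⟩ := hvinj a b a' b' ha hb ha' hb' heq
    omega
  have hvU : ∀ a b : ℕ, a ≤ 4 → b ≤ 4 → v a b ∈ U := by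
    intro a b ha hb
    refine hTx _ ⟨by (try rw [hv1 a b ha]); (try rw [hv2 a b hb]); (try rw [hvdef]); (try dsimp only); omega, by (try rw [hv1 a b ha]); (try rw [hv2 a b hb]); (try rw [hvdef]); (try dsimp only); omega, by (try rw [hv1 a b ha]); (try rw [hv2 a b hb]); (try rw [hvdef]); (try dsimp only); omega, by (try rw [hv1 a b ha]); (try rw [hv2 a b hb]); (try rw [hvdef]); (try dsimp only); omega⟩
  set Tset : Set (Fin k × Fin k) := {p | x.1.val - 2 ≤ p.1.val ∧ p.1.val ≤ x.1.val + 2 ∧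
      x.2.val - 2 ≤ p.2.val ∧ p.2.val ≤ x.2.val + 2} with hTdef
  have hvT : ∀ a b : ℕ, a ≤ 4 → b ≤ 4 → v a b ∈ Tset := by
    intro a b ha hb
    simp only [hTdef, Set.mem_setOf_eq]
    refine ⟨by (try rw [hv1 a b ha]); (try rw [hv2 a b hb]); (try rw [hvdef]); (try dsimp only); omega, by (try rw [hv1 a b ha]); (try rw [hv2 a b hb]); (try rw [hvdef]); (try dsimp only); omega, by (try rw [hv1 a b ha]); (try rw [hv2 a b hb]); (try rw [hvdef]); (try dsimp only); omega, by (try rw [hv1 a b ha]); (try rw [hv2 a b hb]); (try rw [hvdef]); (try dsimp only); omega⟩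
  have hTchar : ∀ p ∈ Tset, ∃ a b : ℕ, a ≤ 4 ∧ b ≤ 4 ∧ p = v a b := by
    intro p hp
    simp only [hTdef, Set.mem_setOf_eq] at hp
    exact ⟨p.1.val - (x.1.val - 2), p.2.val - (x.2.val - 2), by omega, by omega,
      hveq p _ _ (by omega) (by omega) (by omega) (by omega)⟩
  have hxv : x = v 2 2 := hveq x 2 2 (by omega) (by omega) (by omega) (by omega)
  have hxT : x ∈ Tset := by simp only [hTdef, Set.mem_setOf_eq]; omega
  have hadjv : ∀ a b a' b' : ℕ, a ≤ 4 → b ≤ 4 → a' ≤ 4 → b' ≤ 4 →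
      ((a' = a + 1 ∧ b' = b) ∨ (a' = a ∧ b' = b + 1) ∨ (a' = a + 1 ∧ b = b' + 1)) →
      (triGrid k).Adj (v a b) (v a' b') := by
    intro a b a' b' ha hb ha' hb' hc
    have h1 := hv1 a b ha; have h2 := hv2 a b hb
    have h1' := hv1 a' b' ha'; have h2' := hv2 a' b' hb'
    simp only [triGrid, SimpleGraph.fromRel_adj]
    have hne : ¬ v a b = v a' b' := by
      intro he
      have e1 : (v a b).1.val = (v a' b').1.val := by rw [he]
      have e2 : (v a b).2.val = (v a' b').2.val := by rw [he]
      rw [h1, h1'] at e1; rw [h2, h2'] at e2; omega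
    refine ⟨hne, Or.inl ?_⟩
    rcases hc with ⟨e1, e2⟩ | ⟨e1, e2⟩ | ⟨e1, e2⟩
    · exact Or.inl ⟨by (try rw [h1, h1']); omega, Fin.ext (by (try rw [h2, h2']); omega)⟩
    · exact Or.inr (Or.inl ⟨Fin.ext (by (try rw [h1, h1']); omega), by (try rw [h2, h2']); omega⟩)
    · exact Or.inr (Or.inr ⟨by (try rw [h1, h1']); omega, by (try rw [h2, h2']); omega⟩)
  have hadjbound : ∀ p q : Fin k × Fin k, (triGrid k).Adj p q →
      p.1.val ≤ q.1.val + 1 ∧ q.1.val ≤ p.1.val + 1 ∧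
      p.2.val ≤ q.2.val + 1 ∧ q.2.val ≤ p.2.val + 1 := by
    intro p q h
    simp only [triGrid, SimpleGraph.fromRel_adj, Fin.ext_iff] at h
    obtain ⟨-, h⟩ := h
    omega
  set R : Set (Fin k × Fin k) := {v 0 0, v 0 1, v 0 2, v 0 3, v 0 4, v 1 4, v 2 4, v 3 4, v 4 4, v 4 3, v 4 2, v 4 1, v 4 0, v 3 0, v 2 0, v 1 0} with hRdef
  have hRchar : ∀ z ∈ R, ∃ a b : ℕ, a ≤ 4 ∧ b ≤ 4 ∧ (a = 0 ∨ a = 4 ∨ b = 0 ∨ b = 4) ∧ z = v a b := by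
    intro z hz
    simp only [hRdef, Set.mem_insert_iff, Set.mem_singleton_iff] at hz
    rcases hz with rfl|rfl|rfl|rfl|rfl|rfl|rfl|rfl|rfl|rfl|rfl|rfl|rfl|rfl|rfl|rfl
    exacts [⟨0, 0, by omega, by omega, by omega, rfl⟩,
      ⟨0, 1, by omega, by omega, by omega, rfl⟩,
      ⟨0, 2, by omega, by omega, by omega, rfl⟩,
      ⟨0, 3, by omega, by omega, by omega, rfl⟩,
      ⟨0, 4, by omega, by omega, by omega, rfl⟩,
      ⟨1, 4, by omega, by omega, by omega, rfl⟩,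
      ⟨2, 4, by omega, by omega, by omega, rfl⟩,
      ⟨3, 4, by omega, by omega, by omega, rfl⟩,
      ⟨4, 4, by omega, by omega, by omega, rfl⟩,
      ⟨4, 3, by omega, by omega, by omega, rfl⟩,
      ⟨4, 2, by omega, by omega, by omega, rfl⟩,
      ⟨4, 1, by omega, by omega, by omega, rfl⟩,
      ⟨4, 0, by omega, by omega, by omega, rfl⟩,
      ⟨3, 0, by omega, by omega, by omega, rfl⟩,
      ⟨2, 0, by omega, by omega, by omega, rfl⟩,
      ⟨1, 0, by omega, by omega, by omega, rfl⟩]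
  have hRmem : ∀ a b : ℕ, a ≤ 4 → b ≤ 4 → (a = 0 ∨ a = 4 ∨ b = 0 ∨ b = 4) → v a b ∈ R := by
    intro a b ha hb hc
    rw [hRdef]
    interval_cases a <;> interval_cases b <;>
      first
      | exact absurd hc (by omega)
      | exact Set.mem_insert _ _
      | exact Set.mem_insert_of_mem _ (Set.mem_insert _ _)
      | exact Set.mem_insert_of_mem _ (Set.mem_insert_of_mem _ (Set.mem_insert _ _))
      | exact Set.mem_insert_of_mem _ (Set.mem_insert_of_mem _ (Set.mem_insert_of_mem _ (Set.mem_insert _ _)))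
      | exact Set.mem_insert_of_mem _ (Set.mem_insert_of_mem _ (Set.mem_insert_of_mem _ (Set.mem_insert_of_mem _ (Set.mem_insert _ _))))
      | exact Set.mem_insert_of_mem _ (Set.mem_insert_of_mem _ (Set.mem_insert_of_mem _ (Set.mem_insert_of_mem _ (Set.mem_insert_of_mem _ (Set.mem_insert _ _)))))
      | exact Set.mem_insert_of_mem _ (Set.mem_insert_of_mem _ (Set.mem_insert_of_mem _ (Set.mem_insert_of_mem _ (Set.mem_insert_of_mem _ (Set.mem_insert_of_mem _ (Set.mem_insert _ _))))))
      | exact Set.mem_insert_of_mem _ (Set.mem_insert_of_mem _ (Set.mem_insert_of_mem _ (Set.mem_insert_of_mem _ (Set.mem_insert_of_mem _ (Set.mem_insert_of_mem _ (Set.mem_insert_of_mem _ (Set.mem_insert _ _)))))))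
      | exact Set.mem_insert_of_mem _ (Set.mem_insert_of_mem _ (Set.mem_insert_of_mem _ (Set.mem_insert_of_mem _ (Set.mem_insert_of_mem _ (Set.mem_insert_of_mem _ (Set.mem_insert_of_mem _ (Set.mem_insert_of_mem _ (Set.mem_insert _ _))))))))
      | exact Set.mem_insert_of_mem _ (Set.mem_insert_of_mem _ (Set.mem_insert_of_mem _ (Set.mem_insert_of_mem _ (Set.mem_insert_of_mem _ (Set.mem_insert_of_mem _ (Set.mem_insert_of_mem _ (Set.mem_insert_of_mem _ (Set.mem_insert_of_mem _ (Set.mem_insert _ _)))))))))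
      | exact Set.mem_insert_of_mem _ (Set.mem_insert_of_mem _ (Set.mem_insert_of_mem _ (Set.mem_insert_of_mem _ (Set.mem_insert_of_mem _ (Set.mem_insert_of_mem _ (Set.mem_insert_of_mem _ (Set.mem_insert_of_mem _ (Set.mem_insert_of_mem _ (Set.mem_insert_of_mem _ (Set.mem_insert _ _))))))))))
      | exact Set.mem_insert_of_mem _ (Set.mem_insert_of_mem _ (Set.mem_insert_of_mem _ (Set.mem_insert_of_mem _ (Set.mem_insert_of_mem _ (Set.mem_insert_of_mem _ (Set.mem_insert_of_mem _ (Set.mem_insert_of_mem _ (Set.mem_insert_of_mem _ (Set.mem_insert_of_mem _ (Set.mem_insert_of_mem _ (Set.mem_insert _ _)))))))))))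
      | exact Set.mem_insert_of_mem _ (Set.mem_insert_of_mem _ (Set.mem_insert_of_mem _ (Set.mem_insert_of_mem _ (Set.mem_insert_of_mem _ (Set.mem_insert_of_mem _ (Set.mem_insert_of_mem _ (Set.mem_insert_of_mem _ (Set.mem_insert_of_mem _ (Set.mem_insert_of_mem _ (Set.mem_insert_of_mem _ (Set.mem_insert_of_mem _ (Set.mem_insert _ _))))))))))))
      | exact Set.mem_insert_of_mem _ (Set.mem_insert_of_mem _ (Set.mem_insert_of_mem _ (Set.mem_insert_of_mem _ (Set.mem_insert_of_mem _ (Set.mem_insert_of_mem _ (Set.mem_insert_of_mem _ (Set.mem_insert_of_mem _ (Set.mem_insert_of_mem _ (Set.mem_insert_of_mem _ (Set.mem_insert_of_mem _ (Set.mem_insert_of_mem _ (Set.mem_insert_of_mem _ (Set.mem_insert _ _)))))))))))))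
      | exact Set.mem_insert_of_mem _ (Set.mem_insert_of_mem _ (Set.mem_insert_of_mem _ (Set.mem_insert_of_mem _ (Set.mem_insert_of_mem _ (Set.mem_insert_of_mem _ (Set.mem_insert_of_mem _ (Set.mem_insert_of_mem _ (Set.mem_insert_of_mem _ (Set.mem_insert_of_mem _ (Set.mem_insert_of_mem _ (Set.mem_insert_of_mem _ (Set.mem_insert_of_mem _ (Set.mem_insert_of_mem _ (Set.mem_insert _ _))))))))))))))
      | exact Set.mem_insert_of_mem _ (Set.mem_insert_of_mem _ (Set.mem_insert_of_mem _ (Set.mem_insert_of_mem _ (Set.mem_insert_of_mem _ (Set.mem_insert_of_mem _ (Set.mem_insert_of_mem _ (Set.mem_insert_of_mem _ (Set.mem_insert_of_mem _ (Set.mem_insert_of_mem _ (Set.mem_insert_of_mem _ (Set.mem_insert_of_mem _ (Set.mem_insert_of_mem _ (Set.mem_insert_of_mem _ (Set.mem_insert_of_mem _ (rfl)))))))))))))))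
  have hRU : ∀ z ∈ R, z ∈ U := by
    intro z hz
    obtain ⟨a, b, ha, hb, -, rfl⟩ := hRchar z hz
    exact hvU a b ha hb
  have hnotR : ∀ a b : ℕ, 1 ≤ a → a ≤ 3 → 1 ≤ b → b ≤ 3 → v a b ∉ R := by
    intro a b h1 h2 h3 h4 hmem
    obtain ⟨a', b', ha', hb', hbd, heq⟩ := hRchar _ hmem
    obtain ⟨e1, e2⟩ := hvinj a b a' b' (by omega) (by omega) ha' hb' heq
    omega
  have hRconn : ((triGrid k).induce R).Connected := by
    rw [hRdef]
    refine induce_insert_connected (Set.mem_insert _ _) (hadjv 0 0 0 1 (by omega) (by omega) (by omega) (by omega) (by omega)) ?_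
    refine induce_insert_connected (Set.mem_insert _ _) (hadjv 0 1 0 2 (by omega) (by omega) (by omega) (by omega) (by omega)) ?_
    refine induce_insert_connected (Set.mem_insert _ _) (hadjv 0 2 0 3 (by omega) (by omega) (by omega) (by omega) (by omega)) ?_
    refine induce_insert_connected (Set.mem_insert _ _) (hadjv 0 3 0 4 (by omega) (by omega) (by omega) (by omega) (by omega)) ?_
    refine induce_insert_connected (Set.mem_insert _ _) (hadjv 0 4 1 4 (by omega) (by omega) (by omega) (by omega) (by omega)) ?_
    refine induce_insert_connected (Set.mem_insert _ _) (hadjv 1 4 2 4 (by omega) (by omega) (by omega) (by omega) (by omega)) ?_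
    refine induce_insert_connected (Set.mem_insert _ _) (hadjv 2 4 3 4 (by omega) (by omega) (by omega) (by omega) (by omega)) ?_
    refine induce_insert_connected (Set.mem_insert _ _) (hadjv 3 4 4 4 (by omega) (by omega) (by omega) (by omega) (by omega)) ?_
    refine induce_insert_connected (Set.mem_insert _ _) (hadjv 4 3 4 4 (by omega) (by omega) (by omega) (by omega) (by omega)).symm ?_
    refine induce_insert_connected (Set.mem_insert _ _) (hadjv 4 2 4 3 (by omega) (by omega) (by omega) (by omega) (by omega)).symm ?_
    refine induce_insert_connected (Set.mem_insert _ _) (hadjv 4 1 4 2 (by omega) (by omega) (by omega) (by omega) (by omega)).symm ?_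
    refine induce_insert_connected (Set.mem_insert _ _) (hadjv 4 0 4 1 (by omega) (by omega) (by omega) (by omega) (by omega)).symm ?_
    refine induce_insert_connected (Set.mem_insert _ _) (hadjv 3 0 4 0 (by omega) (by omega) (by omega) (by omega) (by omega)).symm ?_
    refine induce_insert_connected (Set.mem_insert _ _) (hadjv 2 0 3 0 (by omega) (by omega) (by omega) (by omega) (by omega)).symm ?_
    refine induce_insert_connected rfl (hadjv 1 0 2 0 (by omega) (by omega) (by omega) (by omega) (by omega)).symm ?_
    exact induce_singleton_connected _ (v 1 0)
  -- a walk from y to x in the grid, supported in U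
  have hwex : ∃ w : (triGrid k).Walk y x, ∀ z ∈ w.support, z ∈ U := by
    obtain ⟨w₀⟩ := hU.preconnected ⟨y, hyU⟩ ⟨x, hxU⟩
    refine ⟨w₀.map (SimpleGraph.Embedding.induce U).toHom, ?_⟩
    intro z hz
    replace hz : z ∈ (w₀.map (SimpleGraph.Embedding.induce U).toHom).support := hz
    rw [SimpleGraph.Walk.support_map] at hz
    obtain ⟨z', hz', rfl⟩ := List.mem_map.mp hz
    exact z'.2
  obtain ⟨w, hwU⟩ := hwex
  obtain ⟨c, S, hcT, hcS, hyS, hsupp, huniq, hSconn, hS1, hS2⟩ := prefix_lemma Tset w hxT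
  have hSU : ∀ z ∈ S, z ∈ U := fun z hz => hwU z (hsupp z hz)
  have hST : ∀ z ∈ S, z ∈ Tset → z = y ∨ z ∈ R := by
    by_cases hyT : y ∈ Tset
    · intro z hz hzT
      left
      have hz' := huniq z hz hzT
      have hSy := hS1 hyT
      rw [hSy] at hcS
      exact hz'.trans hcS
    · intro z hz hzT
      right
      obtain ⟨d, hdS, hdT, hdc⟩ := hS2 hyT
      have hzc := huniq z hz hzT
      obtain ⟨a, b, ha, hb, hc⟩ := hTchar c hcT
      have hbnd := hadjbound d c hdc
      rw [hc] at hbnd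
      rw [hv1 a b ha, hv2 a b hb] at hbnd
      simp only [hTdef, Set.mem_setOf_eq] at hdT
      have hdb : ¬ (x.1.val - 2 ≤ d.1.val ∧ d.1.val ≤ x.1.val + 2 ∧
          x.2.val - 2 ≤ d.2.val ∧ d.2.val ≤ x.2.val + 2) := hdT
      have hbdy : a = 0 ∨ a = 4 ∨ b = 0 ∨ b = 4 := by omega
      rw [hzc, hc]
      exact hRmem a b ha hb hbdy
  have hnotS : ∀ a b : ℕ, 1 ≤ a → a ≤ 3 → 1 ≤ b → b ≤ 3 → v a b ≠ y → v a b ∉ S := by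
    intro a b h1 h2 h3 h4 hne hmem
    rcases hST _ hmem (hvT a b (by omega) (by omega)) with h | h
    · exact hne h
    · exact hnotR a b h1 h2 h3 h4 h
  have hax : ∀ a b : ℕ, ((a=1∧b=2)∨(a=1∧b=3)∨(a=2∧b=1)∨(a=2∧b=3)∨(a=3∧b=1)∨(a=3∧b=2)) →
      (triGrid k).Adj x (v a b) := by
    intro a b h
    rw [hxv]
    rcases h with ⟨rfl,rfl⟩|⟨rfl,rfl⟩|⟨rfl,rfl⟩|⟨rfl,rfl⟩|⟨rfl,rfl⟩|⟨rfl,rfl⟩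
    · exact (hadjv 1 2 2 2 (by omega) (by omega) (by omega) (by omega) (by omega)).symm
    · exact (hadjv 1 3 2 2 (by omega) (by omega) (by omega) (by omega) (by omega)).symm
    · exact (hadjv 2 1 2 2 (by omega) (by omega) (by omega) (by omega) (by omega)).symm
    · exact hadjv 2 2 2 3 (by omega) (by omega) (by omega) (by omega) (by omega)
    · exact hadjv 2 2 3 1 (by omega) (by omega) (by omega) (by omega) (by omega)
    · exact hadjv 2 2 3 2 (by omega) (by omega) (by omega) (by omega) (by omega)
  have hnbr_ne_y : ∀ a b : ℕ,
      ((a=1∧b=2)∨(a=1∧b=3)∨(a=2∧b=1)∨(a=2∧b=3)∨(a=3∧b=1)∨(a=3∧b=2)) → v a b ≠ y := by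
    intro a b h heq
    exact hnotgrid (heq ▸ hax a b h)
  have hnbr_not4 : ∀ a b : ℕ,
      ((a=1∧b=2)∨(a=1∧b=3)∨(a=2∧b=1)∨(a=2∧b=3)∨(a=3∧b=1)∨(a=3∧b=2)) → v a b ∉ R ∪ S := by
    intro a b h hmem
    have hb1 : 1 ≤ a ∧ a ≤ 3 ∧ 1 ≤ b ∧ b ≤ 3 := by omega
    rcases hmem with hm | hm
    · exact hnotR a b hb1.1 hb1.2.1 hb1.2.2.1 hb1.2.2.2 hm
    · exact hnotS a b hb1.1 hb1.2.1 hb1.2.2.1 hb1.2.2.2 (hnbr_ne_y a b h) hm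
  have hx_not4 : x ∉ R ∪ S := by
    rw [hxv]
    rintro (hm | hm)
    · exact hnotR 2 2 (by omega) (by omega) (by omega) (by omega) hm
    · exact hnotS 2 2 (by omega) (by omega) (by omega) (by omega)
        (fun heq => hxy (hxv.trans heq)) hm
  have hP4conn : ((triGrid k).induce (R ∪ S)).Connected := by
    by_cases hyT : y ∈ Tset
    · have hSy := hS1 hyT
      rw [hSy]
      have hyc : y ∈ R ∨ y = v 1 1 ∨ y = v 3 3 := by
        obtain ⟨a, b, ha, hb, rfl⟩ := hTchar y hyT
        interval_cases a <;> interval_cases b <;>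
          first
          | exact Or.inl (hRmem _ _ (by omega) (by omega) (by omega))
          | exact Or.inr (Or.inl rfl)
          | exact Or.inr (Or.inr rfl)
          | exact absurd hxv hxy
          | exact absurd rfl (hnbr_ne_y _ _ (by omega))
      rcases hyc with hyR | hy11 | hy33
      · have hEq : R ∪ {y} = R := Set.union_eq_self_of_subset_right
          (Set.singleton_subset_iff.mpr hyR)
        rw [hEq]; exact hRconn
      · rw [hy11]
        exact SimpleGraph.connected_induce_union hRconn.preconnected
          (induce_singleton_connected _ (v 1 1)).preconnected
          (hRmem 0 1 (by omega) (by omega) (by omega)) rfl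
          (hadjv 0 1 1 1 (by omega) (by omega) (by omega) (by omega) (by omega))
      · rw [hy33]
        exact SimpleGraph.connected_induce_union hRconn.preconnected
          (induce_singleton_connected _ (v 3 3)).preconnected
          (hRmem 4 3 (by omega) (by omega) (by omega)) rfl
          ((hadjv 3 3 4 3 (by omega) (by omega) (by omega) (by omega) (by omega)).symm)
    · obtain ⟨d, hdS, hdT, hdc⟩ := hS2 hyT
      rcases hST c hcS hcT with hcy | hcR
      · exact absurd (hcy ▸ hcT) hyT
      · exact SimpleGraph.induce_union_connected hRconn.preconnected hSconn.preconnected ⟨c, hcR, hcS⟩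
  have hlift : ∀ s : Set (Fin k × Fin k), s ⊆ U → ((triGrid k).induce s).Connected →
      ((H.induce U).induce (Subtype.val ⁻¹' s)).Connected := by
    intro s hsU hconn
    exact induce_induce_connected H hsU (hconn.mono (fun a b hab => hext hab))
  have hmkdisj : ∀ (A B : Set (Fin k × Fin k)), (∀ z, z ∈ A → z ∈ B → False) →
      Disjoint (Subtype.val ⁻¹' A : Set U) (Subtype.val ⁻¹' B) := by
    intro A B h
    rw [Set.disjoint_left]
    intro z hz1 hz2
    exact h z.val hz1 hz2
  have gax1 : (triGrid k).Adj x (v 3 2) := hax 3 2 (by omega)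
  have gax2 : (triGrid k).Adj x (v 2 3) := hax 2 3 (by omega)
  have gax3 : (triGrid k).Adj x (v 2 1) := hax 2 1 (by omega)
  have g12 : (triGrid k).Adj (v 3 2) (v 2 3) := (hadjv 2 3 3 2 (by omega) (by omega) (by omega) (by omega) (by omega)).symm
  have g13 : (triGrid k).Adj (v 3 2) (v 3 1) := (hadjv 3 1 3 2 (by omega) (by omega) (by omega) (by omega) (by omega)).symm
  have g23 : (triGrid k).Adj (v 1 2) (v 2 1) := hadjv 1 2 2 1 (by omega) (by omega) (by omega) (by omega) (by omega)
  have g14 : (triGrid k).Adj (v 3 2) (v 4 2) := hadjv 3 2 4 2 (by omega) (by omega) (by omega) (by omega) (by omega)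
  have g24 : (triGrid k).Adj (v 1 2) (v 0 2) := (hadjv 0 2 1 2 (by omega) (by omega) (by omega) (by omega) (by omega)).symm
  have g34 : (triGrid k).Adj (v 2 1) (v 2 0) := (hadjv 2 0 2 1 (by omega) (by omega) (by omega) (by omega) (by omega)).symm
  have hU32 := hvU 3 2 (by omega) (by omega)
  have hU23 := hvU 2 3 (by omega) (by omega)
  have hU13 := hvU 1 3 (by omega) (by omega)
  have hU12 := hvU 1 2 (by omega) (by omega)
  have hU21 := hvU 2 1 (by omega) (by omega)
  have hU31 := hvU 3 1 (by omega) (by omega)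
  have hU42 := hvU 4 2 (by omega) (by omega)
  have hU02 := hvU 0 2 (by omega) (by omega)
  have hU20 := hvU 2 0 (by omega) (by omega)
  have m42 : v 4 2 ∈ R ∪ S := Or.inl (hRmem 4 2 (by omega) (by omega) (by omega))
  have m02 : v 0 2 ∈ R ∪ S := Or.inl (hRmem 0 2 (by omega) (by omega) (by omega))
  have m20 : v 2 0 ∈ R ∪ S := Or.inl (hRmem 2 0 (by omega) (by omega) (by omega))
  have d01 : ∀ z : Fin k × Fin k, z ∈ ({x} : Set _) → z ∈ ({v 3 2} : Set _) → False := by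
    intro z hz1 hz2
    rw [Set.mem_singleton_iff] at hz1 hz2
    subst hz1
    exact hvne 2 2 3 2 (by omega) (by omega) (by omega) (by omega) (by omega) (hxv.symm.trans hz2)
  have d02 : ∀ z : Fin k × Fin k, z ∈ ({x} : Set _) →
      z ∈ ({v 2 3, v 1 3, v 1 2} : Set _) → False := by
    intro z hz1 hz2
    rw [Set.mem_singleton_iff] at hz1
    subst hz1
    rcases hz2 with hz2 | hz2 | hz2
    · exact hvne 2 2 2 3 (by omega) (by omega) (by omega) (by omega) (by omega) (hxv.symm.trans hz2)
    · exact hvne 2 2 1 3 (by omega) (by omega) (by omega) (by omega) (by omega) (hxv.symm.trans hz2)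
    · exact hvne 2 2 1 2 (by omega) (by omega) (by omega) (by omega) (by omega) (hxv.symm.trans hz2)
  have d03 : ∀ z : Fin k × Fin k, z ∈ ({x} : Set _) →
      z ∈ ({v 2 1, v 3 1} : Set _) → False := by
    intro z hz1 hz2
    rw [Set.mem_singleton_iff] at hz1
    subst hz1
    rcases hz2 with hz2 | hz2
    · exact hvne 2 2 2 1 (by omega) (by omega) (by omega) (by omega) (by omega) (hxv.symm.trans hz2)
    · exact hvne 2 2 3 1 (by omega) (by omega) (by omega) (by omega) (by omega) (hxv.symm.trans hz2)
  have d04 : ∀ z : Fin k × Fin k, z ∈ ({x} : Set _) → z ∈ R ∪ S → False := by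
    intro z hz1 hz2
    rw [Set.mem_singleton_iff] at hz1
    subst hz1
    exact hx_not4 hz2
  have d12 : ∀ z : Fin k × Fin k, z ∈ ({v 3 2} : Set _) →
      z ∈ ({v 2 3, v 1 3, v 1 2} : Set _) → False := by
    intro z hz1 hz2
    rw [Set.mem_singleton_iff] at hz1
    subst hz1
    rcases hz2 with hz2 | hz2 | hz2
    · exact hvne 3 2 2 3 (by omega) (by omega) (by omega) (by omega) (by omega) hz2
    · exact hvne 3 2 1 3 (by omega) (by omega) (by omega) (by omega) (by omega) hz2
    · exact hvne 3 2 1 2 (by omega) (by omega) (by omega) (by omega) (by omega) hz2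
  have d13 : ∀ z : Fin k × Fin k, z ∈ ({v 3 2} : Set _) →
      z ∈ ({v 2 1, v 3 1} : Set _) → False := by
    intro z hz1 hz2
    rw [Set.mem_singleton_iff] at hz1
    subst hz1
    rcases hz2 with hz2 | hz2
    · exact hvne 3 2 2 1 (by omega) (by omega) (by omega) (by omega) (by omega) hz2
    · exact hvne 3 2 3 1 (by omega) (by omega) (by omega) (by omega) (by omega) hz2
  have d14 : ∀ z : Fin k × Fin k, z ∈ ({v 3 2} : Set _) → z ∈ R ∪ S → False := by
    intro z hz1 hz2
    rw [Set.mem_singleton_iff] at hz1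
    subst hz1
    exact hnbr_not4 3 2 (by omega) hz2
  have d23 : ∀ z : Fin k × Fin k, z ∈ ({v 2 3, v 1 3, v 1 2} : Set _) →
      z ∈ ({v 2 1, v 3 1} : Set _) → False := by
    intro z hz1 hz2
    rcases hz1 with rfl | rfl | rfl <;> rcases hz2 with hz2 | hz2
    · exact hvne 2 3 2 1 (by omega) (by omega) (by omega) (by omega) (by omega) hz2
    · exact hvne 2 3 3 1 (by omega) (by omega) (by omega) (by omega) (by omega) hz2
    · exact hvne 1 3 2 1 (by omega) (by omega) (by omega) (by omega) (by omega) hz2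
    · exact hvne 1 3 3 1 (by omega) (by omega) (by omega) (by omega) (by omega) hz2
    · exact hvne 1 2 2 1 (by omega) (by omega) (by omega) (by omega) (by omega) hz2
    · exact hvne 1 2 3 1 (by omega) (by omega) (by omega) (by omega) (by omega) hz2
  have d24 : ∀ z : Fin k × Fin k, z ∈ ({v 2 3, v 1 3, v 1 2} : Set _) → z ∈ R ∪ S → False := by
    intro z hz1 hz2
    rcases hz1 with rfl | rfl | rfl
    · exact hnbr_not4 2 3 (by omega) hz2
    · exact hnbr_not4 1 3 (by omega) hz2
    · exact hnbr_not4 1 2 (by omega) hz2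
  have d34 : ∀ z : Fin k × Fin k, z ∈ ({v 2 1, v 3 1} : Set _) → z ∈ R ∪ S → False := by
    intro z hz1 hz2
    rcases hz1 with rfl | rfl
    · exact hnbr_not4 2 1 (by omega) hz2
    · exact hnbr_not4 3 1 (by omega) hz2
  have hsymm : ∀ (A B : Set (Fin k × Fin k)), (∀ z, z ∈ A → z ∈ B → False) →
      (∀ z, z ∈ B → z ∈ A → False) := fun A B h z hz1 hz2 => h z hz2 hz1
  refine ⟨![Subtype.val ⁻¹' {x}, Subtype.val ⁻¹' {v 3 2},
      Subtype.val ⁻¹' {v 2 3, v 1 3, v 1 2}, Subtype.val ⁻¹' {v 2 1, v 3 1},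
      Subtype.val ⁻¹' (R ∪ S)], ?_, ?_, ?_, ?_⟩
  · intro b
    fin_cases b
    · exact ⟨⟨x, hxU⟩, rfl⟩
    · exact ⟨⟨v 3 2, hvU 3 2 (by omega) (by omega)⟩, rfl⟩
    · exact ⟨⟨v 2 3, hvU 2 3 (by omega) (by omega)⟩, Or.inl rfl⟩
    · exact ⟨⟨v 2 1, hvU 2 1 (by omega) (by omega)⟩, Or.inl rfl⟩
    · exact ⟨⟨y, hyU⟩, Or.inr hyS⟩
  · intro b
    fin_cases b
    · exact hlift {x} (Set.singleton_subset_iff.mpr hxU) (induce_singleton_connected _ x)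
    · exact hlift {v 3 2} (Set.singleton_subset_iff.mpr (hvU 3 2 (by omega) (by omega)))
        (induce_singleton_connected _ _)
    · refine hlift {v 2 3, v 1 3, v 1 2} ?_ ?_
      · intro z hz
        rcases hz with rfl | rfl | rfl
        · exact hvU 2 3 (by omega) (by omega)
        · exact hvU 1 3 (by omega) (by omega)
        · exact hvU 1 2 (by omega) (by omega)
      · refine induce_insert_connected (Set.mem_insert _ _)
          ((hadjv 1 3 2 3 (by omega) (by omega) (by omega) (by omega) (by omega)).symm) ?_
        refine induce_insert_connected rfl
          ((hadjv 1 2 1 3 (by omega) (by omega) (by omega) (by omega) (by omega)).symm) ?_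
        exact induce_singleton_connected _ _
    · refine hlift {v 2 1, v 3 1} ?_ ?_
      · intro z hz
        rcases hz with rfl | rfl
        · exact hvU 2 1 (by omega) (by omega)
        · exact hvU 3 1 (by omega) (by omega)
      · refine induce_insert_connected rfl (hadjv 2 1 3 1 (by omega) (by omega) (by omega) (by omega) (by omega)) ?_
        exact induce_singleton_connected _ _
    · refine hlift (R ∪ S) ?_ hP4conn
      intro z hz
      rcases hz with hz | hz
      · exact hRU z hz
      · exact hSU z hz
  · intro i j hij
    fin_cases i <;> fin_cases j <;>
      first
      | exact absurd rfl hij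
      | exact hmkdisj _ _ d01
      | exact hmkdisj _ _ d02
      | exact hmkdisj _ _ d03
      | exact hmkdisj _ _ d04
      | exact hmkdisj _ _ d12
      | exact hmkdisj _ _ d13
      | exact hmkdisj _ _ d14
      | exact hmkdisj _ _ d23
      | exact hmkdisj _ _ d24
      | exact hmkdisj _ _ d34
      | exact hmkdisj _ _ (hsymm _ _ d01)
      | exact hmkdisj _ _ (hsymm _ _ d02)
      | exact hmkdisj _ _ (hsymm _ _ d03)
      | exact hmkdisj _ _ (hsymm _ _ d04)
      | exact hmkdisj _ _ (hsymm _ _ d12)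
      | exact hmkdisj _ _ (hsymm _ _ d13)
      | exact hmkdisj _ _ (hsymm _ _ d14)
      | exact hmkdisj _ _ (hsymm _ _ d23)
      | exact hmkdisj _ _ (hsymm _ _ d24)
      | exact hmkdisj _ _ (hsymm _ _ d34)
  · intro b1 b2 hb5
    fin_cases b1 <;> fin_cases b2
    exacts [absurd rfl hb5.ne,
      ⟨⟨x, hxU⟩, rfl, ⟨v 3 2, hU32⟩, rfl, hext gax1⟩,
      ⟨⟨x, hxU⟩, rfl, ⟨v 2 3, hU23⟩, Or.inl rfl, hext gax2⟩,
      ⟨⟨x, hxU⟩, rfl, ⟨v 2 1, hU21⟩, Or.inl rfl, hext gax3⟩,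
      ⟨⟨x, hxU⟩, rfl, ⟨y, hyU⟩, Or.inr hyS, hedge⟩,
      ⟨⟨v 3 2, hU32⟩, rfl, ⟨x, hxU⟩, rfl, (hext gax1).symm⟩,
      absurd rfl hb5.ne,
      ⟨⟨v 3 2, hU32⟩, rfl, ⟨v 2 3, hU23⟩, Or.inl rfl, hext g12⟩,
      ⟨⟨v 3 2, hU32⟩, rfl, ⟨v 3 1, hU31⟩, Or.inr rfl, hext g13⟩,
      ⟨⟨v 3 2, hU32⟩, rfl, ⟨v 4 2, hU42⟩, m42, hext g14⟩,
      ⟨⟨v 2 3, hU23⟩, Or.inl rfl, ⟨x, hxU⟩, rfl, (hext gax2).symm⟩,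
      ⟨⟨v 2 3, hU23⟩, Or.inl rfl, ⟨v 3 2, hU32⟩, rfl, (hext g12).symm⟩,
      absurd rfl hb5.ne,
      ⟨⟨v 1 2, hU12⟩, Or.inr (Or.inr rfl), ⟨v 2 1, hU21⟩, Or.inl rfl, hext g23⟩,
      ⟨⟨v 1 2, hU12⟩, Or.inr (Or.inr rfl), ⟨v 0 2, hU02⟩, m02, hext g24⟩,
      ⟨⟨v 2 1, hU21⟩, Or.inl rfl, ⟨x, hxU⟩, rfl, (hext gax3).symm⟩,
      ⟨⟨v 3 1, hU31⟩, Or.inr rfl, ⟨v 3 2, hU32⟩, rfl, (hext g13).symm⟩,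
      ⟨⟨v 2 1, hU21⟩, Or.inl rfl, ⟨v 1 2, hU12⟩, Or.inr (Or.inr rfl), (hext g23).symm⟩,
      absurd rfl hb5.ne,
      ⟨⟨v 2 1, hU21⟩, Or.inl rfl, ⟨v 2 0, hU20⟩, m20, hext g34⟩,
      ⟨⟨y, hyU⟩, Or.inr hyS, ⟨x, hxU⟩, rfl, hedge.symm⟩,
      ⟨⟨v 4 2, hU42⟩, m42, ⟨v 3 2, hU32⟩, rfl, (hext g14).symm⟩,
      ⟨⟨v 0 2, hU02⟩, m02, ⟨v 1 2, hU12⟩, Or.inr (Or.inr rfl), (hext g24).symm⟩,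
      ⟨⟨v 2 0, hU20⟩, m20, ⟨v 2 1, hU21⟩, Or.inl rfl, (hext g34).symm⟩,
      absurd rfl hb5.ne]
end

section
/- Let G be a connected plane graph whose outerplanar decomposition tree has maximal depth d (where layers L₁,…,Lₘ are the outerplanarity layers and the decomposition tree is obtained by contracting each connected component of each layer). Then the radial diameter of G is at most 2d − 1. -/
/-- Let `G` be a connected plane graph whose outerplanar decomposition
tree has maximal depth `d`. Then the radial diameter of `G` is at most `2d − 1`.

The plane embedding is modeled by its vertex–face incidence relation `onFace` with a
distinguished outer face `outer` (adjacent vertices share a face). The outerplanarity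
index `idx : V → ℕ` satisfies: every index lies in `[1, d]` (depth `d` of the
decomposition tree), the first layer is exactly the set of vertices on the outer face,
and every vertex of layer `i+1` shares a face with a vertex of layer `i`. The conclusion
states that any two vertices `u, v` are joined by a sequence of at most `2d` vertices
(i.e. radial distance at most `2d − 1`) in which consecutive vertices share a face. -/
theorem stmt_11 {V F : Type*} (G : SimpleGraph V) (hG : G.Connected)
    (onFace : V → F → Prop) (outer : F) (idx : V → ℕ) (d : ℕ)
    (hadj : ∀ u v : V, G.Adj u v → ∃ f, onFace u f ∧ onFace v f)
    (hidx : ∀ v : V, 1 ≤ idx v ∧ idx v ≤ d)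
    (houter : ∀ v : V, idx v = 1 ↔ onFace v outer)
    (hlayer : ∀ v : V, 1 < idx v → ∃ u : V, idx u + 1 = idx v ∧ ∃ f, onFace u f ∧ onFace v f) :
    ∀ u v : V, ∃ l : List V,
      l.Chain' (fun a b => ∃ f, onFace a f ∧ onFace b f) ∧
      l.head? = some u ∧ l.getLast? = some v ∧ l.length ≤ 2 * d := by
  classical
  have descend : ∀ n (v : V), idx v ≤ n →
      ∃ l : List V, l.Chain' (fun a b => ∃ f, onFace a f ∧ onFace b f) ∧
        l.head? = some v ∧ (∃ w, l.getLast? = some w ∧ idx w = 1) ∧ l.length = idx v := by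
    intro n
    induction n with
    | zero => intro v hv; have := (hidx v).1; omega
    | succ n ih =>
      intro v hv
      by_cases h1 : idx v = 1
      · exact ⟨[v], List.isChain_singleton v, by simp, ⟨v, by simp, h1⟩, by simp [h1]⟩
      · have h1' : 1 < idx v := lt_of_le_of_ne (hidx v).1 (Ne.symm h1)
        obtain ⟨u, hu, f, hfu, hfv⟩ := hlayer v h1'
        have hun : idx u ≤ n := by omega
        obtain ⟨l, hc, hh, ⟨w, hw, hw1⟩, hlen⟩ := ih u hun
        cases l with
        | nil => simp at hh
        | cons a t =>
          have ha : a = u := by simpa using hh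
          refine ⟨v :: a :: t, ?_, rfl, ⟨w, ?_, hw1⟩, ?_⟩
          · exact List.IsChain.cons_cons ⟨f, hfv, ha ▸ hfu⟩ hc
          · simpa using hw
          · simp only [List.length_cons] at hlen ⊢; omega
  intro u v
  obtain ⟨lu, hcu, hhu, ⟨a, hla, ha1⟩, hlenu⟩ := descend (idx u) u le_rfl
  obtain ⟨lv, hcv, hhv, ⟨b, hlb, hb1⟩, hlenv⟩ := descend (idx v) v le_rfl
  have hlu_ne : lu ≠ [] := by intro h; simp [h] at hhu
  have hlv_ne : lv ≠ [] := by intro h; simp [h] at hhv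
  refine ⟨lu ++ lv.reverse, ?_, ?_, ?_, ?_⟩
  · refine List.IsChain.append hcu ?_ ?_
    · rw [List.isChain_reverse]
      exact hcv.imp (fun x y ⟨f, hx, hy⟩ => ⟨f, hy, hx⟩)
    · intro x hx y hy
      rw [List.head?_reverse] at hy
      rw [hla] at hx; rw [hlb] at hy
      simp only [Option.mem_def, Option.some.injEq] at hx hy
      subst hx; subst hy
      exact ⟨outer, (houter a).1 ha1, (houter b).1 hb1⟩
  · rw [List.head?_append, hhu]; rfl
  · rw [List.getLast?_append_of_ne_nil _ (by simpa using hlv_ne),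
      List.getLast?_reverse, hhv]
  · have h1 := (hidx u).2
    have h2 := (hidx v).2
    simp only [List.length_append, List.length_reverse]
    omega
end

section
/- Let S₁, S₂ be two nested vertex-disjoint restricted (v₀,v₃)-separators in a connected graph G, with G[S₁] and G[S₂] connected. If P is a path from S₁ to S₂ whose internal vertices avoid S₁ ∪ S₂, then V(P) ⊆ R_G[v₀, S₂] ∩ R_G[v₃, S₁]. -/
/-- `reach G v S` is `R_G(v, S)`: the set of vertices reachable from `v` in `G − S`,
i.e. the vertex set of the connected component of `G − S` containing `v`. -/
def reach {V : Type*} (G : SimpleGraph V) (v : V) (S : Set V) : Set V :=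
  {u | ∃ w : G.Walk v u, ∀ s ∈ S, s ∉ w.support}

/-- `S` is a restricted `(a,b)`-separator in `G`: `S` avoids `a` and `b` and meets every
`(a,b)`-path. -/
def IsRestrictedSeparator {V : Type*} (G : SimpleGraph V) (a b : V) (S : Set V) : Prop :=
  a ∉ S ∧ b ∉ S ∧ ∀ p : G.Walk a b, ∃ s ∈ S, s ∈ p.support

open SimpleGraph

lemma reach_extend {V : Type*} {G : SimpleGraph V} {v : V} {S : Set V} {u x : V}
    (hu : u ∈ reach G v S) (w : G.Walk u x) (hw : ∀ z ∈ w.support, z ∉ S) :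
    x ∈ reach G v S := by
  obtain ⟨w₀, hw₀⟩ := hu
  refine ⟨w₀.append w, fun s hs hm => ?_⟩
  rw [Walk.mem_support_append_iff] at hm
  rcases hm with hm | hm
  · exact hw₀ s hs hm
  · exact hw s hm hs

lemma reach_adj {V : Type*} {G : SimpleGraph V} {v : V} {S : Set V} {u t : V}
    (hu : u ∈ reach G v S) (h : G.Adj u t) (ht : t ∉ S) : t ∈ reach G v S := by
  obtain ⟨w₀, hw₀⟩ := hu
  refine ⟨w₀.concat h, fun s hs hm => ?_⟩
  rw [Walk.support_concat, List.mem_append] at hm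
  rcases hm with hm | hm
  · exact hw₀ s hs hm
  · simp only [List.mem_singleton] at hm
    exact ht (hm ▸ hs)

/-- Spread membership in `reach` through a connected induced subgraph disjoint from `X`. -/
lemma reach_spread {V : Type*} {G : SimpleGraph V} {v : V} {X S : Set V}
    (hc : (G.induce S).Connected) (hdisj : ∀ z ∈ S, z ∉ X) {s s' : V}
    (hs : s ∈ S) (hs' : s' ∈ S) (h : s ∈ reach G v X) : s' ∈ reach G v X := by
  obtain ⟨w⟩ := hc.preconnected ⟨s, hs⟩ ⟨s', hs'⟩
  refine reach_extend h (w.map (Embedding.induce S).toHom) (fun z hz => ?_)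
  erw [Walk.support_map, List.mem_map] at hz
  obtain ⟨⟨z', hz'⟩, _, rfl⟩ := hz
  exact hdisj z' hz'

/-- First hit of a set `T` along a walk starting outside `T`. -/
lemma first_hit {V : Type*} {G : SimpleGraph V} {T : Set V} :
    ∀ {x y : V} (w : G.Walk x y), x ∉ T → (∃ t ∈ w.support, t ∈ T) →
      ∃ t ∈ T, ∃ u : V, ∃ w' : G.Walk x u, G.Adj u t ∧ ∀ z ∈ w'.support, z ∉ T := by
  intro x y w
  induction w with
  | nil =>
    intro hx ⟨t, ht, htT⟩
    simp only [Walk.support_nil, List.mem_singleton] at ht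
    exact absurd (ht ▸ htT) hx
  | @cons x x' y h q ih =>
    intro hx hhit
    by_cases hx' : x' ∈ T
    · exact ⟨x', hx', x, Walk.nil, h, fun z hz => by
        simp only [Walk.support_nil, List.mem_singleton] at hz; exact hz ▸ hx⟩
    · obtain ⟨t, ht, htT⟩ := hhit
      rw [Walk.support_cons, List.mem_cons] at ht
      rcases ht with rfl | ht
      · exact absurd htT hx
      · obtain ⟨t, htT, u, w'', hadj, havoid⟩ := ih hx' ⟨t, ht, htT⟩
        refine ⟨t, htT, u, Walk.cons h w'', hadj, fun z hz => ?_⟩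
        rw [Walk.support_cons, List.mem_cons] at hz
        rcases hz with rfl | hz
        · exact hx
        · exact havoid z hz

/-- Along a path whose only possible `S`-vertex is the endpoint `b`, every vertex other than
`b` is reachable from `v` avoiding `S`, given that the start is. -/
lemma path_prefix_reach {V : Type*} {G : SimpleGraph V} {v : V} {S : Set V} {a b : V}
    (p : G.Walk a b) (hp : p.IsPath) (ha : a ∈ reach G v S)
    (hS : ∀ z ∈ p.support, z ∈ S → z = b) {x : V} (hx : x ∈ p.support) (hxb : x ≠ b) :
    x ∈ reach G v S := by
  haveI := Classical.decEq V
  refine reach_extend ha (p.takeUntil x hx) (fun z hz hzS => ?_)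
  have hzb : z = b := hS z (p.support_takeUntil_subset hx hz) hzS
  subst hzb
  have hnodup := hp.support_nodup
  rw [← p.take_spec hx, Walk.support_append] at hnodup
  have hdisj := List.disjoint_of_nodup_append hnodup
  have hbd : z ∈ (p.dropUntil x hx).support := Walk.end_mem_support _
  rw [(p.dropUntil x hx).support_eq_cons, List.mem_cons] at hbd
  rcases hbd with hbd | hbd
  · exact hxb hbd.symm
  · exact hdisj hz hbd

/-- Let `S₁, S₂` be two nested vertex-disjoint restricted
`(v₀,v₃)`-separators in a connected graph `G`, with `G[S₁]` and `G[S₂]` connected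
(nested: `R_G(v₀, S₁) ⊆ R_G(v₀, S₂)`). If `P` is a path from `S₁` to `S₂` whose internal
vertices avoid `S₁ ∪ S₂`, then `V(P) ⊆ R_G[v₀, S₂] ∩ R_G[v₃, S₁]`. -/
theorem stmt_18 {V : Type*} (G : SimpleGraph V) (hG : G.Connected)
    (v₀ v₃ : V) (S₁ S₂ : Set V) (hdisj : Disjoint S₁ S₂)
    (hc₁ : (G.induce S₁).Connected) (hc₂ : (G.induce S₂).Connected)
    (hs₁ : IsRestrictedSeparator G v₀ v₃ S₁)
    (hs₂ : IsRestrictedSeparator G v₀ v₃ S₂)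
    (hnest : reach G v₀ S₁ ⊆ reach G v₀ S₂)
    (a b : V) (ha : a ∈ S₁) (hb : b ∈ S₂)
    (p : G.Walk a b) (hp : p.IsPath)
    (hint : ∀ x ∈ p.support, x ≠ a → x ≠ b → x ∉ S₁ ∪ S₂) :
    ∀ x ∈ p.support, x ∈ (reach G v₀ S₂ ∪ S₂) ∩ (reach G v₃ S₁ ∪ S₁) := by
  obtain ⟨hv₀1, hv₃1, hsep₁⟩ := hs₁
  obtain ⟨hv₀2, hv₃2, hsep₂⟩ := hs₂
  have hd12 : ∀ z ∈ S₁, z ∉ S₂ := fun z hz hz' => hdisj.ne_of_mem hz hz' rfl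
  have hd21 : ∀ z ∈ S₂, z ∉ S₁ := fun z hz hz' => hdisj.ne_of_mem hz' hz rfl
  obtain ⟨w₀₃⟩ := hG.preconnected v₀ v₃
  -- Step A: S₁ ⊆ reach G v₀ S₂
  have hS₁sub : ∀ s ∈ S₁, s ∈ reach G v₀ S₂ := by
    obtain ⟨s, hsS, hsmem⟩ := hsep₁ w₀₃
    obtain ⟨t, htT, u, w', hadj, havoid⟩ := first_hit w₀₃ hv₀1 ⟨s, hsmem, hsS⟩
    have hu : u ∈ reach G v₀ S₁ := ⟨w', fun z hz hm => havoid z hm hz⟩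
    have ht2 : t ∈ reach G v₀ S₂ := reach_adj (hnest hu) hadj (hd12 t htT)
    exact fun s' hs' => reach_spread hc₁ hd12 htT hs' ht2
  -- Step B: S₂ ⊆ reach G v₃ S₁
  have hS₂sub : ∀ s ∈ S₂, s ∈ reach G v₃ S₁ := by
    have hv₃T : v₃ ∉ S₁ ∪ S₂ := by
      rintro (h | h)
      · exact hv₃1 h
      · exact hv₃2 h
    obtain ⟨s, hsS, hsmem⟩ := hsep₁ w₀₃
    have hsmem' : s ∈ w₀₃.reverse.support := by
      rw [Walk.support_reverse, List.mem_reverse]; exact hsmem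
    obtain ⟨t, htT, u, w', hadj, havoid⟩ :=
      first_hit w₀₃.reverse hv₃T ⟨s, hsmem', Or.inl hsS⟩
    rcases htT with ht1 | ht2
    · -- contradiction: v₀ → t → v₃ walk avoiding S₂
      exfalso
      obtain ⟨q, hq⟩ := hS₁sub t ht1
      obtain ⟨z, hzS, hzmem⟩ := hsep₂ (q.append (w'.concat hadj).reverse)
      rw [Walk.mem_support_append_iff] at hzmem
      rcases hzmem with hzm | hzm
      · exact hq z hzS hzm
      · rw [Walk.support_reverse, List.mem_reverse, Walk.support_concat,
          List.mem_append] at hzm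
        rcases hzm with hzm | hzm
        · exact havoid z hzm (Or.inr hzS)
        · simp only [List.mem_singleton] at hzm
          exact hd12 t ht1 (hzm ▸ hzS)
    · have hu : u ∈ reach G v₃ S₁ := ⟨w', fun z hz hm => havoid z hm (Or.inl hz)⟩
      have ht : t ∈ reach G v₃ S₁ := reach_adj hu hadj (hd21 t ht2)
      exact fun s' hs' => reach_spread hc₂ hd21 ht2 hs' ht
  intro x hx
  constructor
  · by_cases hxb : x = b
    · exact Or.inr (hxb ▸ hb)
    · refine Or.inl (path_prefix_reach p hp (hS₁sub a ha) (fun z hz hzS => ?_) hx hxb)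
      by_contra hzb
      rcases eq_or_ne z a with rfl | hza
      · exact hd12 z ha hzS
      · exact hint z hz hza hzb (Or.inr hzS)
  · by_cases hxa : x = a
    · exact Or.inr (hxa ▸ ha)
    · have hx' : x ∈ p.reverse.support := by
        rw [Walk.support_reverse, List.mem_reverse]; exact hx
      refine Or.inl (path_prefix_reach p.reverse hp.reverse (hS₂sub b hb)
        (fun z hz hzS => ?_) hx' hxa)
      have hz' : z ∈ p.support := by
        rw [Walk.support_reverse, List.mem_reverse] at hz; exact hz
      by_contra hza
      rcases eq_or_ne z b with rfl | hzb
      · exact hd21 z hb hzS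
      · exact hint z hz' hza hzb (Or.inl hzS)
end
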